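/- arXiv:1412.5237 — 7 statements merged into one kernel-verified Lean document; each statement's English description precedes it below -/
import Mathlib

section
/- For every twice continuously differentiable function v : [A,B] → ℂ, the intertwining relation B L v = L C v holds, i.e., for every y ∈ (A,B), with u(x) = ρ(l⁻¹(x)) v(l⁻¹(x)) and x = l(y), one has −u″(x) + Q(x) u(x) = −(ρ(y)/r(y)) · ( p(y) v″(y) + p′(y) v′(y) − q(y) v(y) ). Here B = −d²/dx² + Q(x) and C = −(1/r)(d/dy (p d/dy) − q). -/
open MeasureTheory Topology Filter

theorem liouville_intertwining_relation
    (A B : ℝ) (hAB : A < B)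
    (p r : ℝ → ℝ) (q : ℝ → ℂ)
    (hp : ContDiffOn ℝ 2 p (Set.Icc A B))
    (hr : ContDiffOn ℝ 2 r (Set.Icc A B))
    (hq : ContinuousOn q (Set.Icc A B))
    (hppos : ∀ y ∈ Set.Icc A B, 0 < p y)
    (hrpos : ∀ y ∈ Set.Icc A B, 0 < r y)
    (y₀ : ℝ) (hy₀ : y₀ ∈ Set.Icc A B)
    (l : ℝ → ℝ) (hl : ∀ y, l y = ∫ s in y₀..y, Real.sqrt (r s / p s))
    (ρ : ℝ → ℝ) (hρ : ∀ y, ρ y = (p y * r y) ^ (1 / 4 : ℝ))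
    (a b : ℝ) (ha : a = l A) (hb : b = l B)
    (hmono : StrictMonoOn l (Set.Icc A B))
    (linv : ℝ → ℝ)
    (hlinv_maps : Set.MapsTo linv (Set.Icc a b) (Set.Icc A B))
    (hlinv_left : ∀ y ∈ Set.Icc A B, linv (l y) = y)
    (hlinv_right : ∀ x ∈ Set.Icc a b, l (linv x) = x)
    (Q : ℝ → ℂ)
    (hQ : ∀ x, Q x = q (linv x) / (r (linv x) : ℂ) -
      (((p (linv x) / (r (linv x)) ^ 3) ^ (1 / 4 : ℝ) *
        deriv (fun t => p t * deriv (fun s => (p s * r s) ^ (-(1 / 4) : ℝ)) t) (linv x) : ℝ) : ℂ))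
    (v : ℝ → ℂ) (hv : ContDiffOn ℝ 2 v (Set.Icc A B))
    (u : ℝ → ℂ) (hu : ∀ x, u x = (ρ (linv x) : ℂ) * v (linv x)) :
    ∀ y ∈ Set.Ioo A B,
      -(deriv (deriv u) (l y)) + Q (l y) * u (l y) =
        -((ρ y : ℂ) / (r y : ℂ)) *
          ((p y : ℂ) * deriv (deriv v) y + (Complex.ofReal (deriv p y)) * deriv v y - q y * v y) := by
  intro y hy
  have hsub : Set.Ioo A B ⊆ Set.Icc A B := Set.Ioo_subset_Icc_self
  have hSopen : IsOpen (Set.Ioo A B) := isOpen_Ioo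
  have hyI : y ∈ Set.Icc A B := hsub hy
  -- basic smoothness on the open set
  have hpS : ContDiffOn ℝ 2 p (Set.Ioo A B) := hp.mono hsub
  have hrS : ContDiffOn ℝ 2 r (Set.Ioo A B) := hr.mono hsub
  have hvS : ContDiffOn ℝ 2 v (Set.Ioo A B) := hv.mono hsub
  have hprS : ContDiffOn ℝ 2 (fun t => p t * r t) (Set.Ioo A B) := hpS.mul hrS
  have hprpos : ∀ t ∈ Set.Ioo A B, 0 < p t * r t :=
    fun t ht => mul_pos (hppos t (hsub ht)) (hrpos t (hsub ht))
  have hρS : ContDiffOn ℝ 2 ρ (Set.Ioo A B) := by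
    have : ContDiffOn ℝ 2 (fun t => (p t * r t) ^ (1 / 4 : ℝ)) (Set.Ioo A B) :=
      fun t ht => (hprS t ht).rpow_const_of_ne (hprpos t ht).ne'
    exact this.congr fun t ht => hρ t
  have hρ'S : ContDiffOn ℝ 1 (deriv ρ) (Set.Ioo A B) :=
    hρS.deriv_of_isOpen hSopen (by norm_num)
  have hp'S : ContDiffOn ℝ 1 (deriv p) (Set.Ioo A B) :=
    hpS.deriv_of_isOpen hSopen (by norm_num)
  have hv'S : ContDiffOn ℝ 1 (deriv v) (Set.Ioo A B) :=
    hvS.deriv_of_isOpen hSopen (by norm_num)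
  -- HasDerivAt facts at points of the open set
  have hpd : ∀ t ∈ Set.Ioo A B, HasDerivAt p (deriv p t) t := fun t ht =>
    (((hpS.contDiffAt (hSopen.mem_nhds ht)).differentiableAt (by norm_num))).hasDerivAt
  have hrd : ∀ t ∈ Set.Ioo A B, HasDerivAt r (deriv r t) t := fun t ht =>
    (((hrS.contDiffAt (hSopen.mem_nhds ht)).differentiableAt (by norm_num))).hasDerivAt
  have hvd : ∀ t ∈ Set.Ioo A B, HasDerivAt v (deriv v t) t := fun t ht =>
    (((hvS.contDiffAt (hSopen.mem_nhds ht)).differentiableAt (by norm_num))).hasDerivAt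
  have hρd : ∀ t ∈ Set.Ioo A B, HasDerivAt ρ (deriv ρ t) t := fun t ht =>
    (((hρS.contDiffAt (hSopen.mem_nhds ht)).differentiableAt (by norm_num))).hasDerivAt
  have hρ'd : ∀ t ∈ Set.Ioo A B, HasDerivAt (deriv ρ) (deriv (deriv ρ) t) t := fun t ht =>
    (((hρ'S.contDiffAt (hSopen.mem_nhds ht)).differentiableAt (by norm_num))).hasDerivAt
  have hv'd : ∀ t ∈ Set.Ioo A B, HasDerivAt (deriv v) (deriv (deriv v) t) t := fun t ht =>
    (((hv'S.contDiffAt (hSopen.mem_nhds ht)).differentiableAt (by norm_num))).hasDerivAt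
  -- φ
  set φ : ℝ → ℝ := fun t => Real.sqrt (r t / p t) with hφdef
  have hφpos : ∀ t ∈ Set.Icc A B, 0 < φ t := fun t ht =>
    Real.sqrt_pos.2 (div_pos (hrpos t ht) (hppos t ht))
  have hρpos : ∀ t ∈ Set.Icc A B, 0 < ρ t := fun t ht => by
    rw [hρ t]; exact Real.rpow_pos_of_pos (mul_pos (hppos t ht) (hrpos t ht)) _
  have hρsq : ∀ t ∈ Set.Icc A B, ρ t ^ 2 = Real.sqrt (p t * r t) := by
    intro t ht
    rw [hρ t, ← Real.rpow_natCast ((p t * r t) ^ (1/4:ℝ)) 2,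
      ← Real.rpow_mul (mul_pos (hppos t ht) (hrpos t ht)).le]
    rw [Real.sqrt_eq_rpow]
    norm_num
  have hφ_eq : ∀ t ∈ Set.Icc A B, φ t = ρ t ^ 2 / p t := by
    intro t ht
    have hp0 := hppos t ht
    have h1 : r t / p t = p t * r t / (p t) ^ 2 := by field_simp
    rw [hρsq t ht, hφdef]
    show Real.sqrt (r t / p t) = Real.sqrt (p t * r t) / p t
    rw [h1, Real.sqrt_div (mul_pos hp0 (hrpos t ht)).le, Real.sqrt_sq hp0.le]
  -- continuity of φ
  have hφcont : ContinuousOn φ (Set.Icc A B) := by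
    apply Real.continuous_sqrt.comp_continuousOn
    exact hr.continuousOn.div hp.continuousOn fun t ht => (hppos t ht).ne'
  have hφcontAt : ∀ t ∈ Set.Ioo A B, ContinuousAt φ t := fun t ht =>
    hφcont.continuousAt (Icc_mem_nhds ht.1 ht.2)
  -- FTC : derivative of l
  have hl_deriv : ∀ t ∈ Set.Ioo A B, HasDerivAt l (φ t) t := by
    intro t ht
    have hint : IntervalIntegrable φ volume y₀ t :=
      (hφcont.mono (Set.uIcc_subset_Icc hy₀ (hsub ht))).intervalIntegrable
    have hmeas : StronglyMeasurableAtFilter φ (𝓝 t) volume :=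
      ContinuousAt.stronglyMeasurableAtFilter hSopen hφcontAt t ht
    have h0 : HasDerivAt (fun z => ∫ s in y₀..z, φ s) (φ t) t :=
      intervalIntegral.integral_hasDerivAt_right hint hmeas (hφcontAt t ht)
    exact h0.congr_of_eventuallyEq (Filter.Eventually.of_forall fun z => hl z)
  -- membership facts
  have hAI : A ∈ Set.Icc A B := Set.left_mem_Icc.2 hAB.le
  have hBI : B ∈ Set.Icc A B := Set.right_mem_Icc.2 hAB.le
  have hl_mem : ∀ t ∈ Set.Ioo A B, l t ∈ Set.Ioo a b := fun t ht =>
    ⟨ha ▸ hmono hAI (hsub ht) ht.1, hb ▸ hmono (hsub ht) hBI ht.2⟩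
  have hl_memI : ∀ t ∈ Set.Icc A B, l t ∈ Set.Icc a b := fun t ht =>
    ⟨ha ▸ hmono.monotoneOn hAI ht ht.1, hb ▸ hmono.monotoneOn ht hBI ht.2⟩
  have hg_mem : ∀ x ∈ Set.Ioo a b, linv x ∈ Set.Ioo A B := by
    intro x hx
    have hxI : x ∈ Set.Icc a b := Set.Ioo_subset_Icc_self hx
    have h1 : linv x ∈ Set.Icc A B := hlinv_maps hxI
    refine ⟨lt_of_le_of_ne h1.1 ?_, lt_of_le_of_ne h1.2 ?_⟩
    · intro hAx
      have := hlinv_right x hxI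
      rw [← hAx, ← ha] at this
      exact hx.1.ne this
    · intro hxB
      have := hlinv_right x hxI
      rw [hxB, ← hb] at this
      exact hx.2.ne' this
  -- monotonicity and continuity of linv
  have hlinv_mono : MonotoneOn linv (Set.Icc a b) := by
    intro x hx x' hx' hxx'
    by_contra hcon
    push_neg at hcon
    have h2 := hmono (hlinv_maps hx') (hlinv_maps hx) hcon
    rw [hlinv_right x hx, hlinv_right x' hx'] at h2
    exact absurd hxx' (not_le.2 h2)
  have himg : Set.Icc A B ⊆ linv '' Set.Icc a b := fun t ht =>
    ⟨l t, hl_memI t ht, hlinv_left t ht⟩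
  have hlinv_cont : ∀ x ∈ Set.Ioo a b, ContinuousAt linv x := by
    intro x hx
    refine continuousAt_of_monotoneOn_of_image_mem_nhds hlinv_mono
      (Icc_mem_nhds hx.1 hx.2) ?_
    have h1 := hg_mem x hx
    exact Filter.mem_of_superset (Icc_mem_nhds h1.1 h1.2) himg
  -- derivative of linv
  have hg_deriv : ∀ x ∈ Set.Ioo a b, HasDerivAt linv (φ (linv x))⁻¹ x := by
    intro x hx
    refine HasDerivAt.of_local_left_inverse (hlinv_cont x hx)
      (hl_deriv _ (hg_mem x hx)) (hφpos _ (hsub (hg_mem x hx))).ne' ?_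
    filter_upwards [Icc_mem_nhds hx.1 hx.2] with z hz
    exact hlinv_right z hz
  -- w, w1, W
  set w : ℝ → ℂ := fun t => (ρ t : ℂ) * v t with hwdef
  set w1 : ℝ → ℂ := fun t => Complex.ofReal (deriv ρ t) * v t + (ρ t : ℂ) * deriv v t with hw1def
  have hw_deriv : ∀ t ∈ Set.Ioo A B, HasDerivAt w (w1 t) t := fun t ht =>
    ((hρd t ht).ofReal_comp).mul (hvd t ht)
  set W : ℝ → ℂ := fun t => w1 t * ((φ t : ℂ))⁻¹ with hWdef
  have hu_deriv : ∀ x ∈ Set.Ioo a b, HasDerivAt u (W (linv x)) x := by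
    intro x hx
    have h1 := HasDerivAt.scomp x (hw_deriv _ (hg_mem x hx)) (hg_deriv x hx)
    have h2 : HasDerivAt u ((φ (linv x))⁻¹ • w1 (linv x)) x := by
      refine h1.congr_of_eventuallyEq (Filter.Eventually.of_forall fun z => ?_)
      exact hu z
    simpa [hWdef, Complex.real_smul, Complex.ofReal_inv, mul_comm] using h2
  have hx₀ : l y ∈ Set.Ioo a b := hl_mem y hy
  have hgx₀ : linv (l y) = y := hlinv_left y hyI
  have hEv : deriv u =ᶠ[𝓝 (l y)] W ∘ linv := by
    filter_upwards [isOpen_Ioo.mem_nhds hx₀] with x hx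
    exact (hu_deriv x hx).deriv
  -- derivative of φ at y
  have hφd : HasDerivAt φ
      ((2 * ρ y * deriv ρ y * p y - ρ y ^ 2 * deriv p y) / p y ^ 2) y := by
    have hsq : HasDerivAt (fun t => ρ t ^ 2) (2 * ρ y * deriv ρ y) y := by
      simpa [mul_comm, mul_assoc] using (hρd y hy).fun_pow 2
    have h1 := hsq.fun_div (hpd y hy) (hppos y hyI).ne'
    have h2 : HasDerivAt (fun t => ρ t ^ 2 / p t)
        ((2 * ρ y * deriv ρ y * p y - ρ y ^ 2 * deriv p y) / p y ^ 2) y := by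
      convert h1 using 1
    refine h2.congr_of_eventuallyEq ?_
    filter_upwards [hSopen.mem_nhds hy] with t ht
    exact hφ_eq t (hsub ht)
  have hφy0 : (φ y : ℂ) ≠ 0 := by
    exact_mod_cast (hφpos y hyI).ne'
  have hφinvR : HasDerivAt (fun t => (φ t)⁻¹)
      (-((2 * ρ y * deriv ρ y * p y - ρ y ^ 2 * deriv p y) / p y ^ 2) / φ y ^ 2) y :=
    hφd.inv (hφpos y hyI).ne'
  have hφinvd : HasDerivAt (fun t => ((φ t : ℂ))⁻¹)
      (Complex.ofReal (-((2 * ρ y * deriv ρ y * p y - ρ y ^ 2 * deriv p y) / p y ^ 2) / φ y ^ 2))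
      y := by
    refine (hφinvR.ofReal_comp).congr_of_eventuallyEq
      (Filter.Eventually.of_forall fun t => ?_)
    exact (Complex.ofReal_inv _).symm
  have hw1d : HasDerivAt w1
      (Complex.ofReal (deriv (deriv ρ) y) * v y + Complex.ofReal (deriv ρ y) * deriv v y +
        (Complex.ofReal (deriv ρ y) * deriv v y + (ρ y : ℂ) * deriv (deriv v) y)) y :=
    (((hρ'd y hy).ofReal_comp).mul (hvd y hy)).add (((hρd y hy).ofReal_comp).mul (hv'd y hy))
  have hWd : HasDerivAt W
      ((Complex.ofReal (deriv (deriv ρ) y) * v y + Complex.ofReal (deriv ρ y) * deriv v y +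
        (Complex.ofReal (deriv ρ y) * deriv v y + (ρ y : ℂ) * deriv (deriv v) y)) * ((φ y : ℂ))⁻¹
       + w1 y * Complex.ofReal (-((2 * ρ y * deriv ρ y * p y - ρ y ^ 2 * deriv p y) / p y ^ 2)
        / φ y ^ 2)) y := hw1d.mul hφinvd
  have hD : deriv (deriv u) (l y) =
      (Complex.ofReal (φ y))⁻¹ *
      ((Complex.ofReal (deriv (deriv ρ) y) * v y + Complex.ofReal (deriv ρ y) * deriv v y +
        (Complex.ofReal (deriv ρ y) * deriv v y + (ρ y : ℂ) * deriv (deriv v) y)) * ((φ y : ℂ))⁻¹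
       + w1 y * Complex.ofReal (-((2 * ρ y * deriv ρ y * p y - ρ y ^ 2 * deriv p y) / p y ^ 2)
        / φ y ^ 2)) := by
    rw [hEv.deriv_eq]
    have hWd' : HasDerivAt W _ (linv (l y)) := hgx₀ ▸ hWd
    have := HasDerivAt.scomp (l y) hWd' (hg_deriv _ hx₀)
    rw [hgx₀] at this
    rw [this.deriv]
    rw [Complex.real_smul, Complex.ofReal_inv]
  -- derivative of the weight in Q
  have hσd : ∀ t ∈ Set.Ioo A B, HasDerivAt (fun s => (p s * r s) ^ (-(1 / 4) : ℝ))
      (-(deriv ρ t) / ρ t ^ 2) t := by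
    intro t ht
    have h1 : HasDerivAt (fun s => (ρ s)⁻¹) (-(deriv ρ t) / ρ t ^ 2) t :=
      (hρd t ht).inv (hρpos t (hsub ht)).ne'
    refine h1.congr_of_eventuallyEq ?_
    filter_upwards [hSopen.mem_nhds ht] with s hs
    rw [hρ s]
    exact Real.rpow_neg (hprpos s hs).le _
  have hρsq_d : HasDerivAt (fun t => ρ t ^ 2) (2 * ρ y * deriv ρ y) y := by
    simpa [mul_comm, mul_assoc] using (hρd y hy).fun_pow 2
  have hg1 : HasDerivAt (fun t => -(deriv ρ t) / ρ t ^ 2)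
      ((-(deriv (deriv ρ) y) * ρ y ^ 2 - -(deriv ρ y) * (2 * ρ y * deriv ρ y)) / (ρ y ^ 2) ^ 2)
      y := ((hρ'd y hy).neg).div hρsq_d (pow_ne_zero 2 (hρpos y hyI).ne')
  have hQd : deriv (fun t => p t * deriv (fun s => (p s * r s) ^ (-(1 / 4) : ℝ)) t) y =
      deriv p y * (-(deriv ρ y) / ρ y ^ 2) +
        p y * ((-(deriv (deriv ρ) y) * ρ y ^ 2 - -(deriv ρ y) * (2 * ρ y * deriv ρ y)) /
          (ρ y ^ 2) ^ 2) := by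
    have h2 := (hpd y hy).fun_mul hg1
    have hEv2 : (fun t => p t * deriv (fun s => (p s * r s) ^ (-(1 / 4) : ℝ)) t)
        =ᶠ[𝓝 y] fun t => p t * (-(deriv ρ t) / ρ t ^ 2) := by
      filter_upwards [hSopen.mem_nhds hy] with t ht
      rw [(hσd t ht).deriv]
    rw [hEv2.deriv_eq, h2.deriv]
  -- algebraic identities
  have hP := hppos y hyI
  have hR := hrpos y hyI
  have hK : (p y / r y ^ 3) ^ (1 / 4 : ℝ) = ρ y / r y := by
    rw [hρ y]
    rw [show p y / r y ^ 3 = p y * r y / r y ^ 4 by field_simp]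
    rw [Real.div_rpow (mul_pos hP hR).le (pow_nonneg hR.le 4)]
    congr 1
    rw [← Real.rpow_natCast (r y) 4, ← Real.rpow_mul hR.le]
    norm_num
  have hρ4 : ρ y ^ 4 = p y * r y := by
    rw [hρ y, ← Real.rpow_natCast _ 4, ← Real.rpow_mul (mul_pos hP hR).le]
    norm_num
  -- final assembly
  have hρ0 : (ρ y : ℂ) ≠ 0 := by exact_mod_cast (hρpos y hyI).ne'
  have hP0 : (p y : ℂ) ≠ 0 := by exact_mod_cast hP.ne'
  have huly : u (l y) = (ρ y : ℂ) * v y := by rw [hu (l y), hgx₀]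
  have hrelC : (ρ y : ℂ) ^ 4 = (p y : ℂ) * (r y : ℂ) := by
    exact_mod_cast congrArg Complex.ofReal hρ4
  have hrel : (r y : ℂ) = (ρ y : ℂ) ^ 4 / (p y : ℂ) := by
    rw [hrelC]; field_simp
  rw [hD, hQ (l y), hgx₀, hQd, hK, huly]
  simp only [hw1def]
  rw [hφ_eq y hyI]
  push_cast
  rw [hrel]
  field_simp [hρ0, hP0]
  ring_nf
end

section
/- Let g : [A,B] → ℂ be continuous with g(y) ≠ 0 for all y, and set f(x) = ρ(l⁻¹(x)) g(l⁻¹(x)) for x ∈ [a,b]. Let X̃, X : ℕ → ([a,b] → ℂ) be defined by X̃⁽⁰⁾ = X⁽⁰⁾ ≡ 1, X̃⁽ⁿ⁾(x) = n ∫_{l(y₀)}^{x} X̃⁽ⁿ⁻¹⁾(s) (f²(s))^{(−1)^{n−1}} ds and X⁽ⁿ⁾(x) = n ∫_{l(y₀)}^{x} X⁽ⁿ⁻¹⁾(s) (f²(s))^{(−1)^{n}} ds, and let Ỹ, Y : ℕ → ([A,B] → ℂ) be defined by Ỹ⁽⁰⁾ = Y⁽⁰⁾ ≡ 1, Ỹ⁽ᵏ⁾(y)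 = k ∫_{y₀}^{y} Ỹ⁽ᵏ⁻¹⁾(s) g²(s) r(s) ds for odd k and Ỹ⁽ᵏ⁾(y) = k ∫_{y₀}^{y} Ỹ⁽ᵏ⁻¹⁾(s) / (g²(s) p(s)) ds for even k > 0, while Y⁽ᵏ⁾(y) = k ∫_{y₀}^{y} Y⁽ᵏ⁻¹⁾(s) / (g²(s) p(s)) ds for odd k and Y⁽ᵏ⁾(y) = k ∫_{y₀}^{y} Y⁽ᵏ⁻¹⁾(s) g²(s) r(s) ds for even k > 0. Then for every n ∈ ℕ and every y ∈ [A,B], Y⁽ⁿ⁾(y) = X⁽ⁿ⁾(l(y)) and Ỹ⁽ⁿ⁾(y) = X̃⁽ⁿ⁾(l(y)). -/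
open MeasureTheory

theorem recursive_integrals_transform
    (A B : ℝ) (hAB : A < B)
    (p r : ℝ → ℝ)
    (hp : ContinuousOn p (Set.Icc A B))
    (hr : ContinuousOn r (Set.Icc A B))
    (hppos : ∀ y ∈ Set.Icc A B, 0 < p y)
    (hrpos : ∀ y ∈ Set.Icc A B, 0 < r y)
    (y₀ : ℝ) (hy₀ : y₀ ∈ Set.Icc A B)
    (l : ℝ → ℝ) (hl : ∀ y, l y = ∫ s in y₀..y, Real.sqrt (r s / p s))
    (ρ : ℝ → ℝ) (hρ : ∀ y, ρ y = (p y * r y) ^ (1 / 4 : ℝ))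
    (a b : ℝ) (ha : a = l A) (hb : b = l B)
    (hmono : StrictMonoOn l (Set.Icc A B))
    (linv : ℝ → ℝ)
    (hlinv_maps : Set.MapsTo linv (Set.Icc a b) (Set.Icc A B))
    (hlinv_left : ∀ y ∈ Set.Icc A B, linv (l y) = y)
    (hlinv_right : ∀ x ∈ Set.Icc a b, l (linv x) = x)
    (g : ℝ → ℂ) (hg : ContinuousOn g (Set.Icc A B))
    (hgne : ∀ y ∈ Set.Icc A B, g y ≠ 0)
    (f : ℝ → ℂ) (hf : ∀ x, f x = (ρ (linv x) : ℂ) * g (linv x))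
    (Xt X : ℕ → ℝ → ℂ) (Yt Y : ℕ → ℝ → ℂ)
    (hXt0 : ∀ x, Xt 0 x = 1) (hX0 : ∀ x, X 0 x = 1)
    (hXt : ∀ n : ℕ, ∀ x ∈ Set.Icc a b,
      Xt (n + 1) x = ((n : ℂ) + 1) * ∫ s in (l y₀)..x, Xt n s * (f s ^ 2) ^ ((-1 : ℤ) ^ n))
    (hX : ∀ n : ℕ, ∀ x ∈ Set.Icc a b,
      X (n + 1) x = ((n : ℂ) + 1) * ∫ s in (l y₀)..x, X n s * (f s ^ 2) ^ ((-1 : ℤ) ^ (n + 1)))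
    (hYt0 : ∀ y, Yt 0 y = 1) (hY0 : ∀ y, Y 0 y = 1)
    (hYt_odd : ∀ k : ℕ, Odd (k + 1) → ∀ y ∈ Set.Icc A B,
      Yt (k + 1) y = ((k : ℂ) + 1) * ∫ s in y₀..y, Yt k s * (g s ^ 2 * (r s : ℂ)))
    (hYt_even : ∀ k : ℕ, Even (k + 1) → ∀ y ∈ Set.Icc A B,
      Yt (k + 1) y = ((k : ℂ) + 1) * ∫ s in y₀..y, Yt k s / (g s ^ 2 * (p s : ℂ)))
    (hY_odd : ∀ k : ℕ, Odd (k + 1) → ∀ y ∈ Set.Icc A B,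
      Y (k + 1) y = ((k : ℂ) + 1) * ∫ s in y₀..y, Y k s / (g s ^ 2 * (p s : ℂ)))
    (hY_even : ∀ k : ℕ, Even (k + 1) → ∀ y ∈ Set.Icc A B,
      Y (k + 1) y = ((k : ℂ) + 1) * ∫ s in y₀..y, Y k s * (g s ^ 2 * (r s : ℂ))) :
    ∀ n : ℕ, ∀ y ∈ Set.Icc A B, Y n y = X n (l y) ∧ Yt n y = Xt n (l y) := by
  classical
  have hAB' : A ≤ B := hAB.le
  have hAmem : A ∈ Set.Icc A B := Set.left_mem_Icc.2 hAB'
  have hBmem : B ∈ Set.Icc A B := Set.right_mem_Icc.2 hAB'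
  set φ : ℝ → ℝ := fun s => Real.sqrt (r s / p s) with hφdef
  have hab : a ≤ b := by
    rw [ha, hb]; exact hmono.monotoneOn hAmem hBmem hAB'
  have hl_maps : ∀ y ∈ Set.Icc A B, l y ∈ Set.Icc a b := by
    intro y hy
    exact ⟨ha ▸ hmono.monotoneOn hAmem hy hy.1, hb ▸ hmono.monotoneOn hy hBmem hy.2⟩
  have hφcont : ContinuousOn φ (Set.Icc A B) := by
    apply Real.continuous_sqrt.comp_continuousOn
    exact hr.div hp (fun y hy => (hppos y hy).ne')
  have hlcont : ContinuousOn l (Set.Icc A B) := by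
    have hint : IntervalIntegrable φ volume A B := by
      apply ContinuousOn.intervalIntegrable
      rwa [Set.uIcc_of_le hAB']
    have := intervalIntegral.continuousOn_primitive_interval' (a := y₀) hint
      (by rwa [Set.uIcc_of_le hAB'])
    rw [Set.uIcc_of_le hAB'] at this
    exact this.congr (fun y _ => hl y)
  have hlderiv : ∀ x ∈ Set.Ioo A B, HasDerivAt l (φ x) x := by
    intro x hx
    have hmem : Set.Icc A B ∈ nhds x := Icc_mem_nhds hx.1 hx.2
    have hca : ContinuousAt φ x := hφcont.continuousAt hmem
    have hint : IntervalIntegrable φ volume y₀ x := by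
      apply ContinuousOn.intervalIntegrable
      apply hφcont.mono
      rw [← Set.uIcc_of_le hAB']
      exact Set.uIcc_subset_uIcc (by rwa [Set.uIcc_of_le hAB'])
        (by rw [Set.uIcc_of_le hAB']; exact Set.Ioo_subset_Icc_self hx)
    have hmeas := ContinuousOn.stronglyMeasurableAtFilter (μ := volume) isOpen_Ioo
      (hφcont.mono Set.Ioo_subset_Icc_self) x hx
    have hd := intervalIntegral.integral_hasDerivAt_right hint hmeas hca
    have : l = fun u => ∫ s in y₀..u, φ s := funext hl
    rw [this]
    exact hd
  -- inverse facts
  have hlinvA : linv a = A := by rw [ha, hlinv_left A hAmem]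
  have hlinvB : linv b = B := by rw [hb, hlinv_left B hBmem]
  have hlinv_smono : StrictMonoOn linv (Set.Icc a b) := by
    intro x hx x' hx' hxx'
    rcases lt_trichotomy (linv x) (linv x') with h | h | h
    · exact h
    · exfalso
      have : x = x' := by
        rw [← hlinv_right x hx, ← hlinv_right x' hx', h]
      exact hxx'.ne this
    · exfalso
      have := hmono (hlinv_maps hx') (hlinv_maps hx) h
      rw [hlinv_right x hx, hlinv_right x' hx'] at this
      exact absurd hxx' (not_lt.2 this.le)
  have hlinv_image : linv '' Set.Icc a b = Set.Icc A B := by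
    apply Set.Subset.antisymm hlinv_maps.image_subset
    intro Y hY
    exact ⟨l Y, hl_maps Y hY, hlinv_left Y hY⟩
  have hlinvcont : ContinuousOn linv (Set.Icc a b) := by
    intro x hx
    have hL : ContinuousWithinAt linv (Set.Icc a x) x := by
      rcases eq_or_lt_of_le hx.1 with h | h
      · rw [← h, Set.Icc_self]
        exact continuousWithinAt_singleton
      · have hAx : A < linv x := by
          have := hlinv_smono (Set.left_mem_Icc.2 hab) hx h
          rwa [hlinvA] at this
        have h1 : Set.Icc a b ∈ nhdsWithin x (Set.Iic x) :=
          mem_nhdsWithin.2 ⟨Set.Ioi a, isOpen_Ioi, h, fun z hz => ⟨hz.1.le, hz.2.trans hx.2⟩⟩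
        have h2 : linv '' Set.Icc a b ∈ nhdsWithin (linv x) (Set.Iic (linv x)) := by
          rw [hlinv_image]
          exact mem_nhdsWithin.2 ⟨Set.Ioi A, isOpen_Ioi, hAx,
            fun z hz => ⟨hz.1.le, hz.2.trans (hlinv_maps hx).2⟩⟩
        exact (hlinv_smono.continuousWithinAt_left_of_image_mem_nhdsWithin h1 h2).mono
          Set.Icc_subset_Iic_self
    have hR : ContinuousWithinAt linv (Set.Icc x b) x := by
      rcases eq_or_lt_of_le hx.2 with h | h
      · rw [h, Set.Icc_self]
        exact continuousWithinAt_singleton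
      · have hxB : linv x < B := by
          have := hlinv_smono hx (Set.right_mem_Icc.2 hab) h
          rwa [hlinvB] at this
        have h1 : Set.Icc a b ∈ nhdsWithin x (Set.Ici x) :=
          mem_nhdsWithin.2 ⟨Set.Iio b, isOpen_Iio, h, fun z hz => ⟨hx.1.trans hz.2, hz.1.le⟩⟩
        have h2 : linv '' Set.Icc a b ∈ nhdsWithin (linv x) (Set.Ici (linv x)) := by
          rw [hlinv_image]
          exact mem_nhdsWithin.2 ⟨Set.Iio B, isOpen_Iio, hxB,
            fun z hz => ⟨(hlinv_maps hx).1.trans hz.2, hz.1.le⟩⟩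
        exact (hlinv_smono.continuousWithinAt_right_of_image_mem_nhdsWithin h1 h2).mono
          Set.Icc_subset_Ici_self
    have := hL.union hR
    apply this.mono
    rw [Set.Icc_union_Icc_eq_Icc hx.1 hx.2]
  -- rho facts
  have hρpos : ∀ t ∈ Set.Icc A B, 0 < ρ t := by
    intro t ht
    rw [hρ]
    exact Real.rpow_pos_of_pos (mul_pos (hppos t ht) (hrpos t ht)) _
  have hρcont : ContinuousOn ρ (Set.Icc A B) := by
    have : ContinuousOn (fun y => (p y * r y) ^ (1/4 : ℝ)) (Set.Icc A B) :=
      (hp.mul hr).rpow_const (fun y _ => Or.inr (by norm_num))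
    exact this.congr (fun y _ => hρ y)
  have hfcont : ContinuousOn f (Set.Icc a b) := by
    have : ContinuousOn (fun x => ((ρ (linv x) : ℂ)) * g (linv x)) (Set.Icc a b) :=
      (Complex.continuous_ofReal.comp_continuousOn (hρcont.comp hlinvcont hlinv_maps)).mul
        (hg.comp hlinvcont hlinv_maps)
    exact this.congr (fun x _ => hf x)
  have hfne : ∀ x ∈ Set.Icc a b, f x ≠ 0 := by
    intro x hx
    rw [hf]
    exact mul_ne_zero (Complex.ofReal_ne_zero.2 (hρpos _ (hlinv_maps hx)).ne')
      (hgne _ (hlinv_maps hx))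
  have hly₀ : l y₀ ∈ Set.Icc a b := hl_maps y₀ hy₀
  have hfl : ∀ t ∈ Set.Icc A B, f (l t) = (ρ t : ℂ) * g t := by
    intro t ht
    rw [hf, hlinv_left t ht]
  -- real identities
  have hsq : ∀ t ∈ Set.Icc A B, (ρ t) ^ 2 = Real.sqrt (p t * r t) := by
    intro t ht
    have hpr : (0:ℝ) < p t * r t := mul_pos (hppos t ht) (hrpos t ht)
    rw [hρ, ← Real.rpow_natCast ((p t * r t) ^ ((1:ℝ)/4)) 2, ← Real.rpow_mul hpr.le,
      Real.sqrt_eq_rpow]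
    norm_num
  have hid1 : ∀ t ∈ Set.Icc A B, φ t * (ρ t) ^ 2 = r t := by
    intro t ht
    have hpt := hppos t ht
    have hrt := hrpos t ht
    rw [hsq t ht, hφdef]
    simp only
    rw [← Real.sqrt_mul (by positivity : (0:ℝ) ≤ r t / p t)]
    rw [show r t / p t * (p t * r t) = (r t) ^ 2 by field_simp]
    exact Real.sqrt_sq hrt.le
  have hid2 : ∀ t ∈ Set.Icc A B, (ρ t) ^ 2 = φ t * p t := by
    intro t ht
    have hpt := hppos t ht
    have hrt := hrpos t ht
    rw [hsq t ht, hφdef]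
    simp only
    have h := Real.sqrt_mul (le_of_lt (div_pos hrt hpt)) (p t ^ 2)
    rw [Real.sqrt_sq hpt.le] at h
    rw [show r t / p t * p t ^ 2 = p t * r t by field_simp] at h
    exact h
  -- change of variables
  have key : ∀ (H : ℝ → ℂ), ContinuousOn H (Set.Icc a b) → ∀ y ∈ Set.Icc A B,
      (∫ s in (l y₀)..(l y), H s) = ∫ t in y₀..y, φ t • H (l t) := by
    intro H hH y hy
    have hsub : Set.uIcc y₀ y ⊆ Set.Icc A B := by
      rw [← Set.uIcc_of_le hAB']
      exact Set.uIcc_subset_uIcc (by rwa [Set.uIcc_of_le hAB'])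
        (by rwa [Set.uIcc_of_le hAB'])
    have himg : l '' Set.uIcc y₀ y ⊆ Set.Icc a b := by
      rintro _ ⟨t, ht, rfl⟩
      exact hl_maps t (hsub ht)
    have hff' : ∀ x ∈ Set.Ioo (min y₀ y) (max y₀ y), HasDerivWithinAt l (φ x) (Set.Ioi x) x := by
      intro x hx
      refine (hlderiv x ⟨?_, ?_⟩).hasDerivWithinAt
      · exact lt_of_le_of_lt (le_min hy₀.1 hy.1) hx.1
      · exact lt_of_lt_of_le hx.2 (max_le hy₀.2 hy.2)
    have := intervalIntegral.integral_comp_smul_deriv'' (hlcont.mono hsub) hff'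
      (hφcont.mono hsub) (hH.mono himg)
    rw [← this]
    simp only [Function.comp_apply]
  -- main induction
  have main : ∀ n : ℕ, (ContinuousOn (X n) (Set.Icc a b) ∧ ContinuousOn (Xt n) (Set.Icc a b)) ∧
      ∀ y ∈ Set.Icc A B, Y n y = X n (l y) ∧ Yt n y = Xt n (l y) := by
    intro n
    induction n with
    | zero =>
      refine ⟨⟨continuousOn_const.congr (fun x _ => hX0 x),
        continuousOn_const.congr (fun x _ => hXt0 x)⟩, ?_⟩
      intro y hy
      exact ⟨by rw [hY0, hX0], by rw [hYt0, hXt0]⟩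
    | succ n IH =>
      obtain ⟨⟨hXc, hXtc⟩, hIH⟩ := IH
      have hzne : ∀ (m : ℤ), ∀ x ∈ Set.Icc a b, f x ^ 2 ≠ 0 ∨ (0:ℤ) ≤ m := by
        intro m x hx
        exact Or.inl (pow_ne_zero 2 (hfne x hx))
      have hH_cont : ContinuousOn (fun s => X n s * (f s ^ 2) ^ ((-1:ℤ) ^ (n+1))) (Set.Icc a b) :=
        hXc.mul ((hfcont.pow 2).zpow₀ _ (hzne _))
      have hHt_cont : ContinuousOn (fun s => Xt n s * (f s ^ 2) ^ ((-1:ℤ) ^ n)) (Set.Icc a b) :=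
        hXtc.mul ((hfcont.pow 2).zpow₀ _ (hzne _))
      have hprimcont : ∀ (H : ℝ → ℂ), ContinuousOn H (Set.Icc a b) →
          ContinuousOn (fun x => ∫ s in (l y₀)..x, H s) (Set.Icc a b) := by
        intro H hH
        have hint : IntervalIntegrable H volume a b := by
          apply ContinuousOn.intervalIntegrable
          rwa [Set.uIcc_of_le hab]
        have := intervalIntegral.continuousOn_primitive_interval' (a := l y₀) hint
          (by rwa [Set.uIcc_of_le hab])
        rwa [Set.uIcc_of_le hab] at this
      have hXc' : ContinuousOn (X (n+1)) (Set.Icc a b) := by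
        have := continuousOn_const (c := ((n:ℂ)+1)) (s := Set.Icc a b)
        refine (this.mul (hprimcont (fun s => X n s * (f s ^ 2) ^ ((-1:ℤ) ^ (n+1))) hH_cont)).congr ?_
        intro x hx
        exact hX n x hx
      have hXtc' : ContinuousOn (Xt (n+1)) (Set.Icc a b) := by
        have := continuousOn_const (c := ((n:ℂ)+1)) (s := Set.Icc a b)
        refine (this.mul (hprimcont (fun s => Xt n s * (f s ^ 2) ^ ((-1:ℤ) ^ n)) hHt_cont)).congr ?_
        intro x hx
        exact hXt n x hx
      refine ⟨⟨hXc', hXtc'⟩, ?_⟩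
      intro y hy
      have hsub : Set.uIcc y₀ y ⊆ Set.Icc A B := by
        rw [← Set.uIcc_of_le hAB']
        exact Set.uIcc_subset_uIcc (by rwa [Set.uIcc_of_le hAB'])
          (by rwa [Set.uIcc_of_le hAB'])
      constructor
      · -- Y part, exponent (-1)^(n+1)
        rw [hX n (l y) (hl_maps y hy), key _ hH_cont y hy]
        rcases Nat.even_or_odd n with he | ho
        · -- n even : (-1)^(n+1) = -1, use hY_odd
          rw [hY_odd n (Even.add_one he) y hy]
          congr 1
          apply intervalIntegral.integral_congr
          intro t ht
          have htm : t ∈ Set.Icc A B := hsub ht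
          have hIHt := (hIH t htm).1
          simp only
          rw [← hIHt, hfl t htm, Odd.neg_one_pow (Even.add_one he), zpow_neg, zpow_one]
          have h2 : ((ρ t : ℂ)) ^ 2 = (φ t : ℂ) * (p t : ℂ) := by
            exact_mod_cast hid2 t htm
          have hgt := hgne t htm
          have hpt : ((p t : ℂ)) ≠ 0 := Complex.ofReal_ne_zero.2 (hppos t htm).ne'
          have hρt : ((ρ t : ℂ)) ≠ 0 := Complex.ofReal_ne_zero.2 (hρpos t htm).ne'
          rw [Complex.real_smul]
          field_simp
          linear_combination (Y n t) * h2
        · -- n odd : (-1)^(n+1) = 1, use hY_even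
          rw [hY_even n (Odd.add_one ho) y hy]
          congr 1
          apply intervalIntegral.integral_congr
          intro t ht
          have htm : t ∈ Set.Icc A B := hsub ht
          have hIHt := (hIH t htm).1
          simp only
          rw [← hIHt, hfl t htm, Even.neg_one_pow (Odd.add_one ho), zpow_one]
          have h1 : (φ t : ℂ) * ((ρ t : ℂ)) ^ 2 = (r t : ℂ) := by
            exact_mod_cast hid1 t htm
          rw [Complex.real_smul]
          linear_combination (-(Y n t * g t ^ 2)) * h1
      · -- Yt part, exponent (-1)^n
        rw [hXt n (l y) (hl_maps y hy), key _ hHt_cont y hy]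
        rcases Nat.even_or_odd n with he | ho
        · -- n even : (-1)^n = 1, Yt uses g^2 r  (n+1 odd)
          rw [hYt_odd n (Even.add_one he) y hy]
          congr 1
          apply intervalIntegral.integral_congr
          intro t ht
          have htm : t ∈ Set.Icc A B := hsub ht
          have hIHt := (hIH t htm).2
          simp only
          rw [← hIHt, hfl t htm, Even.neg_one_pow he, zpow_one]
          have h1 : (φ t : ℂ) * ((ρ t : ℂ)) ^ 2 = (r t : ℂ) := by
            exact_mod_cast hid1 t htm
          rw [Complex.real_smul]
          linear_combination (-(Yt n t * g t ^ 2)) * h1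
        · -- n odd : (-1)^n = -1, Yt uses / (g^2 p) (n+1 even)
          rw [hYt_even n (Odd.add_one ho) y hy]
          congr 1
          apply intervalIntegral.integral_congr
          intro t ht
          have htm : t ∈ Set.Icc A B := hsub ht
          have hIHt := (hIH t htm).2
          simp only
          rw [← hIHt, hfl t htm, Odd.neg_one_pow ho, zpow_neg, zpow_one]
          have h2 : ((ρ t : ℂ)) ^ 2 = (φ t : ℂ) * (p t : ℂ) := by
            exact_mod_cast hid2 t htm
          have hgt := hgne t htm
          have hpt : ((p t : ℂ)) ≠ 0 := Complex.ofReal_ne_zero.2 (hppos t htm).ne'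
          have hρt : ((ρ t : ℂ)) ≠ 0 := Complex.ofReal_ne_zero.2 (hρpos t htm).ne'
          rw [Complex.real_smul]
          field_simp
          linear_combination (Yt n t) * h2
  intro n y hy
  exact (main n).2 y hy
end

section
/- Let g : [A,B] → ℂ be continuous with g(y) ≠ 0 for all y, and set f(x) = ρ(l⁻¹(x)) g(l⁻¹(x)). Define the formal powers φ_k on [a,b] by φ_k = f · X⁽ᵏ⁾ for odd k and φ_k = f · X̃⁽ᵏ⁾ for even k, and the formal powers Φ_k on [A,B] by Φ_k = g · Y⁽ᵏ⁾ for odd k and Φ_k = g · Ỹ⁽ᵏ⁾ for even k, where the systems X̃, X (with base point l(y₀)) and Ỹ, Y (with base point y₀) are defined by the recursions X̃⁽⁰⁾ = X⁽⁰⁾ = Ỹ⁽⁰⁾ = Y⁽⁰⁾ ≡ 1, X̃⁽ⁿ⁾(x) = n ∫_{l(y₀)}^{x} X̃⁽ⁿ⁻¹⁾ (f²)^{(−1)^{n−1}}, X⁽ⁿ⁾(x) = n ∫_{l(y₀)}^{x} X⁽ⁿ⁻¹⁾ (f²)^{(−1)^{n}}, Ỹ⁽ᵏ⁾(y) = k ∫_{y₀}^{y}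 Ỹ⁽ᵏ⁻¹⁾ g² r (k odd), Ỹ⁽ᵏ⁾(y) = k ∫_{y₀}^{y} Ỹ⁽ᵏ⁻¹⁾ / (g² p) (k even), Y⁽ᵏ⁾(y) = k ∫_{y₀}^{y} Y⁽ᵏ⁻¹⁾ / (g² p) (k odd), Y⁽ᵏ⁾(y) = k ∫_{y₀}^{y} Y⁽ᵏ⁻¹⁾ g² r (k even). Then ρ(y) Φ_n(y) = φ_n(l(y)) for every n ∈ ℕ ∪ {0} and every y ∈ [A,B]. -/
open MeasureTheory

lemma formal_powers_sqrt_aux {P R : ℝ} (hP : 0 < P) (hR : 0 < R) :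
    Real.sqrt (R / P) * ((P * R) ^ ((1 : ℝ) / 4)) ^ 2 = R ∧
    Real.sqrt (R / P) * P = ((P * R) ^ ((1 : ℝ) / 4)) ^ 2 := by
  have h1 : ((P * R) ^ ((1 : ℝ) / 4)) ^ 2 = Real.sqrt (P * R) := by
    rw [← Real.rpow_natCast ((P * R) ^ ((1 : ℝ) / 4)) 2, ← Real.rpow_mul (by positivity)]
    norm_num [Real.sqrt_eq_rpow]
  constructor
  · rw [h1, ← Real.sqrt_mul (by positivity)]
    have h2 : R / P * (P * R) = R ^ 2 := by field_simp
    rw [h2, Real.sqrt_sq hR.le]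
  · rw [h1, Real.sqrt_div hR.le, Real.sqrt_mul hP.le]
    have hsP : 0 < Real.sqrt P := Real.sqrt_pos.mpr hP
    rw [div_mul_eq_mul_div, div_eq_iff hsP.ne']
    nth_rewrite 1 [← Real.mul_self_sqrt hP.le]
    ring

theorem formal_powers_transform
    (A B : ℝ) (hAB : A < B)
    (p r : ℝ → ℝ)
    (hp : ContinuousOn p (Set.Icc A B))
    (hr : ContinuousOn r (Set.Icc A B))
    (hppos : ∀ y ∈ Set.Icc A B, 0 < p y)
    (hrpos : ∀ y ∈ Set.Icc A B, 0 < r y)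
    (y₀ : ℝ) (hy₀ : y₀ ∈ Set.Icc A B)
    (l : ℝ → ℝ) (hl : ∀ y, l y = ∫ s in y₀..y, Real.sqrt (r s / p s))
    (ρ : ℝ → ℝ) (hρ : ∀ y, ρ y = (p y * r y) ^ (1 / 4 : ℝ))
    (a b : ℝ) (ha : a = l A) (hb : b = l B)
    (hmono : StrictMonoOn l (Set.Icc A B))
    (linv : ℝ → ℝ)
    (hlinv_maps : Set.MapsTo linv (Set.Icc a b) (Set.Icc A B))
    (hlinv_left : ∀ y ∈ Set.Icc A B, linv (l y) = y)
    (hlinv_right : ∀ x ∈ Set.Icc a b, l (linv x) = x)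
    (g : ℝ → ℂ) (hg : ContinuousOn g (Set.Icc A B))
    (hgne : ∀ y ∈ Set.Icc A B, g y ≠ 0)
    (f : ℝ → ℂ) (hf : ∀ x, f x = (ρ (linv x) : ℂ) * g (linv x))
    (Xt X : ℕ → ℝ → ℂ) (Yt Y : ℕ → ℝ → ℂ)
    (hXt0 : ∀ x, Xt 0 x = 1) (hX0 : ∀ x, X 0 x = 1)
    (hXt : ∀ n : ℕ, ∀ x ∈ Set.Icc a b,
      Xt (n + 1) x = ((n : ℂ) + 1) * ∫ s in (l y₀)..x, Xt n s * (f s ^ 2) ^ ((-1 : ℤ) ^ n))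
    (hX : ∀ n : ℕ, ∀ x ∈ Set.Icc a b,
      X (n + 1) x = ((n : ℂ) + 1) * ∫ s in (l y₀)..x, X n s * (f s ^ 2) ^ ((-1 : ℤ) ^ (n + 1)))
    (hYt0 : ∀ y, Yt 0 y = 1) (hY0 : ∀ y, Y 0 y = 1)
    (hYt_odd : ∀ k : ℕ, Odd (k + 1) → ∀ y ∈ Set.Icc A B,
      Yt (k + 1) y = ((k : ℂ) + 1) * ∫ s in y₀..y, Yt k s * (g s ^ 2 * (r s : ℂ)))
    (hYt_even : ∀ k : ℕ, Even (k + 1) → ∀ y ∈ Set.Icc A B,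
      Yt (k + 1) y = ((k : ℂ) + 1) * ∫ s in y₀..y, Yt k s / (g s ^ 2 * (p s : ℂ)))
    (hY_odd : ∀ k : ℕ, Odd (k + 1) → ∀ y ∈ Set.Icc A B,
      Y (k + 1) y = ((k : ℂ) + 1) * ∫ s in y₀..y, Y k s / (g s ^ 2 * (p s : ℂ)))
    (hY_even : ∀ k : ℕ, Even (k + 1) → ∀ y ∈ Set.Icc A B,
      Y (k + 1) y = ((k : ℂ) + 1) * ∫ s in y₀..y, Y k s * (g s ^ 2 * (r s : ℂ)))
    :
    ∀ n : ℕ, ∀ y ∈ Set.Icc A B,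
      (Odd n → (ρ y : ℂ) * (g y * Y n y) = f (l y) * X n (l y)) ∧
      (Even n → (ρ y : ℂ) * (g y * Yt n y) = f (l y) * Xt n (l y)) := by
  have hAB' : A ≤ B := hAB.le
  have hKicc : Set.uIcc A B = Set.Icc A B := Set.uIcc_of_le hAB'
  -- clamp to [A, B]
  set c : ℝ → ℝ := fun y => ↑(Set.projIcc A B hAB' y) with hc
  have hc_cont : Continuous c := continuous_subtype_val.comp (continuous_projIcc)
  have hc_mem : ∀ y, c y ∈ Set.Icc A B := fun y => (Set.projIcc A B hAB' y).2
  have hc_eq : ∀ y ∈ Set.Icc A B, c y = y := fun y hy => by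
    simp [hc, Set.projIcc_of_mem hAB' hy]
  -- extended integrand for l
  set h : ℝ → ℝ := fun s => Real.sqrt (r (c s) / p (c s)) with hh
  have hh_cont : Continuous h := by
    apply Real.continuous_sqrt.comp
    exact (hr.comp_continuous hc_cont hc_mem).div (hp.comp_continuous hc_cont hc_mem)
      (fun y => (hppos _ (hc_mem y)).ne')
  -- extended primitive
  set L : ℝ → ℝ := fun y => ∫ s in y₀..y, h s with hL
  have hL_deriv : ∀ t, HasDerivAt L (h t) t := fun t =>
    (hh_cont.integral_hasStrictDerivAt y₀ t).hasDerivAt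
  have hsub : ∀ y ∈ Set.Icc A B, Set.uIcc y₀ y ⊆ Set.Icc A B := fun y hy => by
    rw [← hKicc]
    exact Set.uIcc_subset_uIcc (by rw [hKicc]; exact hy₀) (by rw [hKicc]; exact hy)
  have hLl : ∀ y ∈ Set.Icc A B, L y = l y := by
    intro y hy
    rw [hl]
    exact intervalIntegral.integral_congr (fun s hs => by
      rw [hh]; simp only; rw [hc_eq s (hsub y hy hs)])
  -- monotonicity / mapping facts
  have hlmono : MonotoneOn l (Set.Icc A B) := hmono.monotoneOn
  have hA_mem : A ∈ Set.Icc A B := Set.left_mem_Icc.mpr hAB'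
  have hB_mem : B ∈ Set.Icc A B := Set.right_mem_Icc.mpr hAB'
  have hlmaps : ∀ y ∈ Set.Icc A B, l y ∈ Set.Icc a b := fun y hy =>
    ⟨ha ▸ hlmono hA_mem hy hy.1, hb ▸ hlmono hy hB_mem hy.2⟩
  have hab : a ≤ b := by
    rw [ha, hb]; exact (hmono hA_mem hB_mem hAB).le
  have hKab : Set.uIcc a b = Set.Icc a b := Set.uIcc_of_le hab
  have hsubab : ∀ x₁ ∈ Set.Icc a b, ∀ x₂ ∈ Set.Icc a b, Set.uIcc x₁ x₂ ⊆ Set.Icc a b := by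
    intro x₁ h₁ x₂ h₂
    rw [← hKab]
    exact Set.uIcc_subset_uIcc (by rw [hKab]; exact h₁) (by rw [hKab]; exact h₂)
  have hly₀ : l y₀ ∈ Set.Icc a b := hlmaps y₀ hy₀
  -- continuity of l and linv
  have hL_cont : Continuous L := by
    rw [continuous_iff_continuousAt]; exact fun t => (hL_deriv t).continuousAt
  have hl_cont : ContinuousOn l (Set.Icc A B) :=
    hL_cont.continuousOn.congr (fun y hy => (hLl y hy).symm)
  have hlinv_cont : ContinuousOn linv (Set.Icc a b) := by
    let e : Set.Icc A B ≃ Set.Icc a b :=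
      { toFun := fun y => ⟨l y, hlmaps y y.2⟩
        invFun := fun x => ⟨linv x, hlinv_maps x.2⟩
        left_inv := fun y => Subtype.ext (hlinv_left y y.2)
        right_inv := fun x => Subtype.ext (hlinv_right x x.2) }
    have he_cont : Continuous e := Continuous.subtype_mk (hl_cont.restrict) _
    haveI : CompactSpace (Set.Icc A B) := isCompact_iff_compactSpace.mp isCompact_Icc
    let E := he_cont.homeoOfEquivCompactToT2 (f := e)
    rw [continuousOn_iff_continuous_restrict]
    have : Set.restrict (Set.Icc a b) linv = Subtype.val ∘ E.symm := rfl
    change Continuous (Subtype.val ∘ E.symm)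
    exact continuous_subtype_val.comp E.symm.continuous
  -- ρ facts
  have hρpos : ∀ y ∈ Set.Icc A B, 0 < ρ y := fun y hy => by
    rw [hρ]
    have := hppos y hy; have := hrpos y hy
    positivity
  have hρ_cont : ContinuousOn ρ (Set.Icc A B) := by
    apply ContinuousOn.congr (f := fun y => (p y * r y) ^ (1 / 4 : ℝ))
    · exact (hp.mul hr).rpow_const (fun y hy => Or.inr (by norm_num))
    · intro y hy; exact hρ y
  -- f facts
  have hf_cont : ContinuousOn f (Set.Icc a b) := by
    apply ContinuousOn.congr (f := fun x => ((ρ (linv x) : ℝ) : ℂ) * g (linv x))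
    · exact ((Complex.continuous_ofReal.comp_continuousOn
        (hρ_cont.comp hlinv_cont hlinv_maps)).mul (hg.comp hlinv_cont hlinv_maps))
    · intro x hx; exact hf x
  have hfne : ∀ x ∈ Set.Icc a b, f x ≠ 0 := by
    intro x hx
    rw [hf]
    exact mul_ne_zero (by exact_mod_cast (hρpos _ (hlinv_maps hx)).ne')
      (hgne _ (hlinv_maps hx))
  have hfl : ∀ t ∈ Set.Icc A B, f (l t) = (ρ t : ℂ) * g t := fun t ht => by
    rw [hf, hlinv_left t ht]
  -- change of variables machinery
  have CoV : ∀ (G Q : ℝ → ℂ), ContinuousOn G (Set.Icc a b) →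
      (∀ t ∈ Set.Icc A B, (h t : ℂ) * G (l t) = Q t) →
      ∀ y ∈ Set.Icc A B, (∫ s in (l y₀)..(l y), G s) = ∫ t in y₀..y, Q t := by
    intro G Q hG hGQ y hy
    set d : ℝ → ℝ := fun x => ↑(Set.projIcc a b hab x) with hd
    have hd_cont : Continuous d := continuous_subtype_val.comp (continuous_projIcc)
    have hd_mem : ∀ x, d x ∈ Set.Icc a b := fun x => (Set.projIcc a b hab x).2
    have hd_eq : ∀ x ∈ Set.Icc a b, d x = x := fun x hx => by
      simp [hd, Set.projIcc_of_mem hab hx]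
    set G' : ℝ → ℂ := fun x => G (d x) with hG'
    have hG'_cont : Continuous G' := hG.comp_continuous hd_cont hd_mem
    have hG'_eq : ∀ x ∈ Set.Icc a b, G' x = G x := fun x hx => by
      rw [hG']; simp only; rw [hd_eq x hx]
    calc (∫ s in (l y₀)..(l y), G s)
        = ∫ s in (l y₀)..(l y), G' s := by
          exact (intervalIntegral.integral_congr (fun s hs =>
            hG'_eq s (hsubab _ hly₀ _ (hlmaps y hy) hs))).symm
      _ = ∫ s in (L y₀)..(L y), G' s := by rw [hLl y₀ hy₀, hLl y hy]
      _ = ∫ t in y₀..y, h t • G' (L t) := by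
          exact (intervalIntegral.integral_comp_smul_deriv
            (fun t _ => hL_deriv t) hh_cont.continuousOn hG'_cont).symm
      _ = ∫ t in y₀..y, Q t := by
          apply intervalIntegral.integral_congr
          intro t ht
          have htI : t ∈ Set.Icc A B := hsub y hy ht
          simp only
          rw [hLl t htI, hG'_eq _ (hlmaps t htI), ← hGQ t htI, Complex.real_smul]
  -- pointwise parity identities
  have hid1 : ∀ t ∈ Set.Icc A B, (h t : ℂ) * (f (l t) ^ 2) ^ (1 : ℤ) = g t ^ 2 * (r t : ℂ) := by
    intro t ht
    have hre : Real.sqrt (r t / p t) * (ρ t) ^ 2 = r t := by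
      rw [hρ]; exact (formal_powers_sqrt_aux (hppos t ht) (hrpos t ht)).1
    rw [zpow_one, hfl t ht, mul_pow]
    have : (h t : ℂ) * (ρ t : ℂ) ^ 2 = (r t : ℂ) := by
      rw [hh]; simp only; rw [hc_eq t ht]
      exact_mod_cast congrArg (Complex.ofReal) hre
    calc (h t : ℂ) * ((ρ t : ℂ) ^ 2 * g t ^ 2)
        = ((h t : ℂ) * (ρ t : ℂ) ^ 2) * g t ^ 2 := by ring
      _ = g t ^ 2 * (r t : ℂ) := by rw [this]; ring
  have hid2 : ∀ t ∈ Set.Icc A B,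
      (h t : ℂ) * (f (l t) ^ 2) ^ (-1 : ℤ) = 1 / (g t ^ 2 * (p t : ℂ)) := by
    intro t ht
    have hre : Real.sqrt (r t / p t) * p t = (ρ t) ^ 2 := by
      rw [hρ]; exact (formal_powers_sqrt_aux (hppos t ht) (hrpos t ht)).2
    have hhc : (h t : ℂ) * (p t : ℂ) = (ρ t : ℂ) ^ 2 := by
      rw [hh]; simp only; rw [hc_eq t ht]
      exact_mod_cast congrArg (Complex.ofReal) hre
    rw [zpow_neg_one, hfl t ht, mul_pow]
    have hρne : (ρ t : ℂ) ≠ 0 := by exact_mod_cast (hρpos t ht).ne'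
    have hpne : (p t : ℂ) ≠ 0 := by exact_mod_cast (hppos t ht).ne'
    have hgn : g t ≠ 0 := hgne t ht
    field_simp
    linear_combination hhc
  -- the main invariant
  have main : ∀ n : ℕ,
      (∀ y ∈ Set.Icc A B, X n (l y) = Y n y ∧ Xt n (l y) = Yt n y) ∧
      ContinuousOn (X n) (Set.Icc a b) ∧ ContinuousOn (Xt n) (Set.Icc a b) := by
    -- primitive continuity helper
    have prim_cont : ∀ (G : ℝ → ℂ), ContinuousOn G (Set.Icc a b) →
        ContinuousOn (fun x => ∫ s in (l y₀)..x, G s) (Set.Icc a b) := by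
      intro G hG
      set d : ℝ → ℝ := fun x => ↑(Set.projIcc a b hab x) with hd
      have hd_cont : Continuous d := continuous_subtype_val.comp (continuous_projIcc)
      have hd_mem : ∀ x, d x ∈ Set.Icc a b := fun x => (Set.projIcc a b hab x).2
      have hd_eq : ∀ x ∈ Set.Icc a b, d x = x := fun x hx => by
        simp [hd, Set.projIcc_of_mem hab hx]
      set G' : ℝ → ℂ := fun x => G (d x) with hG'
      have hG'_cont : Continuous G' := hG.comp_continuous hd_cont hd_mem
      have hG'_eq : ∀ x ∈ Set.Icc a b, G' x = G x := fun x hx => by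
        rw [hG']; simp only; rw [hd_eq x hx]
      have hcont : Continuous (fun x => ∫ s in (l y₀)..x, G' s) :=
        intervalIntegral.continuous_primitive
          (fun u v => hG'_cont.intervalIntegrable u v) (l y₀)
      apply hcont.continuousOn.congr
      intro x hx
      exact (intervalIntegral.integral_congr (fun s hs =>
        (hG'_eq s (hsubab _ hly₀ _ hx hs)))).symm
    intro n
    induction n with
    | zero =>
      refine ⟨fun y hy => ⟨by rw [hX0, hY0], by rw [hXt0, hYt0]⟩, ?_, ?_⟩
      · exact continuousOn_const.congr (fun x hx => hX0 x)
      · exact continuousOn_const.congr (fun x hx => hXt0 x)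
    | succ n ih =>
      obtain ⟨ihval, ihX, ihXt⟩ := ih
      have hfz : ∀ e : ℤ, ContinuousOn (fun s => (f s ^ 2) ^ e) (Set.Icc a b) := fun e =>
        (hf_cont.pow 2).zpow₀ e (fun x hx => Or.inl (pow_ne_zero 2 (hfne x hx)))
      have hGX : ContinuousOn (fun s => X n s * (f s ^ 2) ^ ((-1 : ℤ) ^ (n + 1)))
          (Set.Icc a b) := ihX.mul (hfz _)
      have hGXt : ContinuousOn (fun s => Xt n s * (f s ^ 2) ^ ((-1 : ℤ) ^ n))
          (Set.Icc a b) := ihXt.mul (hfz _)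
      refine ⟨?_, ?_, ?_⟩
      · intro y hy
        rcases Nat.even_or_odd (n + 1) with hpar | hpar
        · -- n + 1 even, n odd
          have hnodd : Odd n := by
            rcases Nat.even_or_odd n with hn | hn
            · exact ((Nat.not_odd_iff_even.mpr hpar) hn.add_one).elim
            · exact hn
          have hexpX : ((-1 : ℤ)) ^ (n + 1) = 1 := hpar.neg_one_pow
          have hexpXt : ((-1 : ℤ)) ^ n = -1 := hnodd.neg_one_pow
          constructor
          · rw [hX n (l y) (hlmaps y hy), hY_even n hpar y hy]
            congr 1
            refine CoV _ _ hGX (fun t ht => ?_) y hy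
            rw [hexpX, (ihval t ht).1]
            calc (h t : ℂ) * (Y n t * (f (l t) ^ 2) ^ (1 : ℤ))
                = Y n t * ((h t : ℂ) * (f (l t) ^ 2) ^ (1 : ℤ)) := by ring
              _ = Y n t * (g t ^ 2 * (r t : ℂ)) := by rw [hid1 t ht]
          · rw [hXt n (l y) (hlmaps y hy), hYt_even n hpar y hy]
            congr 1
            refine CoV _ _ hGXt (fun t ht => ?_) y hy
            rw [hexpXt, (ihval t ht).2]
            calc (h t : ℂ) * (Yt n t * (f (l t) ^ 2) ^ (-1 : ℤ))
                = Yt n t * ((h t : ℂ) * (f (l t) ^ 2) ^ (-1 : ℤ)) := by ring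
              _ = Yt n t / (g t ^ 2 * (p t : ℂ)) := by rw [hid2 t ht]; ring
        · -- n + 1 odd, n even
          have hneven : Even n := by
            rcases Nat.even_or_odd n with hn | hn
            · exact hn
            · exact ((Nat.not_odd_iff_even.mpr hn.add_one) hpar).elim
          have hexpX : ((-1 : ℤ)) ^ (n + 1) = -1 := hpar.neg_one_pow
          have hexpXt : ((-1 : ℤ)) ^ n = 1 := hneven.neg_one_pow
          constructor
          · rw [hX n (l y) (hlmaps y hy), hY_odd n hpar y hy]
            congr 1
            refine CoV _ _ hGX (fun t ht => ?_) y hy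
            rw [hexpX, (ihval t ht).1]
            calc (h t : ℂ) * (Y n t * (f (l t) ^ 2) ^ (-1 : ℤ))
                = Y n t * ((h t : ℂ) * (f (l t) ^ 2) ^ (-1 : ℤ)) := by ring
              _ = Y n t / (g t ^ 2 * (p t : ℂ)) := by rw [hid2 t ht]; ring
          · rw [hXt n (l y) (hlmaps y hy), hYt_odd n hpar y hy]
            congr 1
            refine CoV _ _ hGXt (fun t ht => ?_) y hy
            rw [hexpXt, (ihval t ht).2]
            calc (h t : ℂ) * (Yt n t * (f (l t) ^ 2) ^ (1 : ℤ))
                = Yt n t * ((h t : ℂ) * (f (l t) ^ 2) ^ (1 : ℤ)) := by ring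
              _ = Yt n t * (g t ^ 2 * (r t : ℂ)) := by rw [hid1 t ht]
      · exact (continuousOn_const.mul (prim_cont _ hGX)).congr
          (fun x hx => hX n x hx)
      · exact (continuousOn_const.mul (prim_cont _ hGXt)).congr
          (fun x hx => hXt n x hx)
  -- conclude
  intro n y hy
  obtain ⟨hXY, hXtYt⟩ := (main n).1 y hy
  constructor
  · intro _
    rw [hfl y hy, hXY]; ring
  · intro _
    rw [hfl y hy, hXtYt]; ring
end

section
/- Let g : [A,B] → ℂ be continuous with g(y) ≠ 0 for all y, and set f(x) = ρ(l⁻¹(x)) g(l⁻¹(x)). Define ψ_k on [a,b] by ψ_k = X⁽ᵏ⁾/f for even k and ψ_k = X̃⁽ᵏ⁾/f for odd k, and Ψ_k on [A,B] by Ψ_k = Y⁽ᵏ⁾/g for even k and Ψ_k = Ỹ⁽ᵏ⁾/g for odd k, where the systems X̃, X (with base point l(y₀)) and Ỹ, Y (with base point y₀) are defined by the recursions X̃⁽⁰⁾ = X⁽⁰⁾ = Ỹ⁽⁰⁾ = Y⁽⁰⁾ ≡ 1, X̃⁽ⁿ⁾(x) = n ∫_{l(y₀)}^{x} X̃⁽ⁿ⁻¹⁾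 (f²)^{(−1)^{n−1}}, X⁽ⁿ⁾(x) = n ∫_{l(y₀)}^{x} X⁽ⁿ⁻¹⁾ (f²)^{(−1)^{n}}, Ỹ⁽ᵏ⁾(y) = k ∫_{y₀}^{y} Ỹ⁽ᵏ⁻¹⁾ g² r (k odd), Ỹ⁽ᵏ⁾(y) = k ∫_{y₀}^{y} Ỹ⁽ᵏ⁻¹⁾ / (g² p) (k even), Y⁽ᵏ⁾(y) = k ∫_{y₀}^{y} Y⁽ᵏ⁻¹⁾ / (g² p) (k odd), Y⁽ᵏ⁾(y) = k ∫_{y₀}^{y} Y⁽ᵏ⁻¹⁾ g² r (k even). Then Ψ_n(y)/ρ(y) = ψ_n(l(y)) for every n ∈ ℕ ∪ {0} and every y ∈ [A,B]. -/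
open MeasureTheory

lemma skfpt_primitive {F : ℝ → ℂ} {a b c : ℝ} (hF : ContinuousOn F (Set.Icc a b))
    (hc : c ∈ Set.Icc a b) :
    ContinuousOn (fun x => ∫ s in c..x, F s) (Set.Icc a b) := by
  have hab : a ≤ b := hc.1.trans hc.2
  set G : ℝ → ℂ := fun s => F (max a (min s b)) with hGdef
  have hmem : ∀ s, max a (min s b) ∈ Set.Icc a b := fun s =>
    ⟨le_max_left _ _, max_le (by linarith) (min_le_right _ _)⟩
  have hG : Continuous G :=
    hF.comp_continuous (continuous_const.max (continuous_id.min continuous_const)) hmem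
  have h1 : ContinuousOn (fun x => ∫ s in c..x, G s) (Set.Icc a b) :=
    (intervalIntegral.continuous_primitive (fun u v => hG.intervalIntegrable u v) c).continuousOn
  refine h1.congr fun x hx => ?_
  refine intervalIntegral.integral_congr fun s hs => ?_
  have hs' : s ∈ Set.Icc a b := by
    rw [← Set.uIcc_of_le hab] at *
    exact Set.uIcc_subset_uIcc hx hc (by rwa [Set.uIcc_comm])
  simp [hGdef, min_eq_left hs'.2, max_eq_right hs'.1]

theorem second_kind_formal_powers_transform
    (A B : ℝ) (hAB : A < B)
    (p r : ℝ → ℝ)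
    (hp : ContinuousOn p (Set.Icc A B))
    (hr : ContinuousOn r (Set.Icc A B))
    (hppos : ∀ y ∈ Set.Icc A B, 0 < p y)
    (hrpos : ∀ y ∈ Set.Icc A B, 0 < r y)
    (y₀ : ℝ) (hy₀ : y₀ ∈ Set.Icc A B)
    (l : ℝ → ℝ) (hl : ∀ y, l y = ∫ s in y₀..y, Real.sqrt (r s / p s))
    (ρ : ℝ → ℝ) (hρ : ∀ y, ρ y = (p y * r y) ^ (1 / 4 : ℝ))
    (a b : ℝ) (ha : a = l A) (hb : b = l B)
    (hmono : StrictMonoOn l (Set.Icc A B))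
    (linv : ℝ → ℝ)
    (hlinv_maps : Set.MapsTo linv (Set.Icc a b) (Set.Icc A B))
    (hlinv_left : ∀ y ∈ Set.Icc A B, linv (l y) = y)
    (hlinv_right : ∀ x ∈ Set.Icc a b, l (linv x) = x)
    (g : ℝ → ℂ) (hg : ContinuousOn g (Set.Icc A B))
    (hgne : ∀ y ∈ Set.Icc A B, g y ≠ 0)
    (f : ℝ → ℂ) (hf : ∀ x, f x = (ρ (linv x) : ℂ) * g (linv x))
    (Xt X : ℕ → ℝ → ℂ) (Yt Y : ℕ → ℝ → ℂ)
    (hXt0 : ∀ x, Xt 0 x = 1) (hX0 : ∀ x, X 0 x = 1)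
    (hXt : ∀ n : ℕ, ∀ x ∈ Set.Icc a b,
      Xt (n + 1) x = ((n : ℂ) + 1) * ∫ s in (l y₀)..x, Xt n s * (f s ^ 2) ^ ((-1 : ℤ) ^ n))
    (hX : ∀ n : ℕ, ∀ x ∈ Set.Icc a b,
      X (n + 1) x = ((n : ℂ) + 1) * ∫ s in (l y₀)..x, X n s * (f s ^ 2) ^ ((-1 : ℤ) ^ (n + 1)))
    (hYt0 : ∀ y, Yt 0 y = 1) (hY0 : ∀ y, Y 0 y = 1)
    (hYt_odd : ∀ k : ℕ, Odd (k + 1) → ∀ y ∈ Set.Icc A B,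
      Yt (k + 1) y = ((k : ℂ) + 1) * ∫ s in y₀..y, Yt k s * (g s ^ 2 * (r s : ℂ)))
    (hYt_even : ∀ k : ℕ, Even (k + 1) → ∀ y ∈ Set.Icc A B,
      Yt (k + 1) y = ((k : ℂ) + 1) * ∫ s in y₀..y, Yt k s / (g s ^ 2 * (p s : ℂ)))
    (hY_odd : ∀ k : ℕ, Odd (k + 1) → ∀ y ∈ Set.Icc A B,
      Y (k + 1) y = ((k : ℂ) + 1) * ∫ s in y₀..y, Y k s / (g s ^ 2 * (p s : ℂ)))
    (hY_even : ∀ k : ℕ, Even (k + 1) → ∀ y ∈ Set.Icc A B,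
      Y (k + 1) y = ((k : ℂ) + 1) * ∫ s in y₀..y, Y k s * (g s ^ 2 * (r s : ℂ)))
    :
    ∀ n : ℕ, ∀ y ∈ Set.Icc A B,
      (Even n → (Y n y / g y) / (ρ y : ℂ) = X n (l y) / f (l y)) ∧
      (Odd n → (Yt n y / g y) / (ρ y : ℂ) = Xt n (l y) / f (l y)) := by
  -- clamp onto [A,B]
  set c : ℝ → ℝ := fun s => max A (min s B) with hcdef
  have hcmem : ∀ s, c s ∈ Set.Icc A B := fun s =>
    ⟨le_max_left _ _, max_le (by linarith) (min_le_right _ _)⟩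
  have hceq : ∀ s ∈ Set.Icc A B, c s = s := fun s hs => by
    simp [hcdef, min_eq_left hs.2, max_eq_right hs.1]
  have hccont : Continuous c :=
    continuous_const.max (continuous_id.min continuous_const)
  set q : ℝ → ℝ := fun s => Real.sqrt (r (c s) / p (c s)) with hqdef
  have hqcont : Continuous q :=
    Real.continuous_sqrt.comp
      ((hr.comp_continuous hccont hcmem).div (hp.comp_continuous hccont hcmem)
        fun x => (hppos _ (hcmem x)).ne')
  have hqeq : ∀ s ∈ Set.Icc A B, q s = Real.sqrt (r s / p s) := fun s hs => by
    simp only [hqdef, hceq s hs]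
  set L : ℝ → ℝ := fun y => ∫ t in y₀..y, q t with hLdef
  have hLderiv : ∀ x : ℝ, HasDerivAt L (q x) x := fun x =>
    intervalIntegral.integral_hasDerivAt_right (hqcont.intervalIntegrable _ _)
      (hqcont.stronglyMeasurableAtFilter _ _) hqcont.continuousAt
  have hIccAB : ∀ {y}, y ∈ Set.Icc A B → Set.uIcc y₀ y ⊆ Set.Icc A B := fun {y} hy => by
    rw [← Set.uIcc_of_le hAB.le]
    exact Set.uIcc_subset_uIcc (by rwa [Set.uIcc_of_le hAB.le]) (by rwa [Set.uIcc_of_le hAB.le])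
  have hLl : ∀ y ∈ Set.Icc A B, L y = l y := by
    intro y hy
    rw [hLdef, hl]
    exact intervalIntegral.integral_congr fun s hs => hqeq s (hIccAB hy hs)
  have hLcont : Continuous L := by
    rw [continuous_iff_continuousAt]; exact fun x => (hLderiv x).continuousAt
  have hlcont : ContinuousOn l (Set.Icc A B) :=
    hLcont.continuousOn.congr fun y hy => (hLl y hy).symm
  have hlab : ∀ y ∈ Set.Icc A B, l y ∈ Set.Icc a b := by
    intro y hy
    have hA : A ∈ Set.Icc A B := ⟨le_refl _, hAB.le⟩
    have hB : B ∈ Set.Icc A B := ⟨hAB.le, le_refl _⟩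
    exact ⟨ha ▸ hmono.monotoneOn hA hy hy.1, hb ▸ hmono.monotoneOn hy hB hy.2⟩
  -- continuity of linv
  have hlinvcont : ContinuousOn linv (Set.Icc a b) := by
    let E : Set.Icc A B ≃ Set.Icc a b :=
      { toFun := fun y => ⟨l y, hlab y y.2⟩
        invFun := fun x => ⟨linv x, hlinv_maps x.2⟩
        left_inv := fun y => Subtype.ext (hlinv_left y y.2)
        right_inv := fun x => Subtype.ext (hlinv_right x x.2) }
    have hEcont : Continuous E := Continuous.subtype_mk hlcont.restrict _
    have hsymm := (hEcont.homeoOfEquivCompactToT2 (f := E)).symm.continuous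
    rw [continuousOn_iff_continuous_restrict]
    exact continuous_subtype_val.comp hsymm
  -- basic positivity / continuity facts
  have hρpos : ∀ y ∈ Set.Icc A B, 0 < ρ y := fun y hy => by
    rw [hρ]; exact Real.rpow_pos_of_pos (mul_pos (hppos y hy) (hrpos y hy)) _
  have hρcont : ContinuousOn ρ (Set.Icc A B) := by
    refine ContinuousOn.congr ?_ fun y hy => hρ y
    exact (hp.mul hr).rpow_const fun y hy =>
      Or.inl (mul_pos (hppos y hy) (hrpos y hy)).ne'
  have hfl : ∀ s ∈ Set.Icc A B, f (l s) = (ρ s : ℂ) * g s := fun s hs => by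
    rw [hf, hlinv_left s hs]
  have hfcont : ContinuousOn f (Set.Icc a b) := by
    refine ContinuousOn.congr ?_ fun x hx => hf x
    exact ((Complex.continuous_ofReal.comp_continuousOn
      (hρcont.comp hlinvcont hlinv_maps)).mul (hg.comp hlinvcont hlinv_maps))
  have hfne : ∀ x ∈ Set.Icc a b, f x ≠ 0 := fun x hx => by
    rw [hf]
    exact mul_ne_zero (Complex.ofReal_ne_zero.2 (hρpos _ (hlinv_maps hx)).ne')
      (hgne _ (hlinv_maps hx))
  -- square of ρ
  have hρ2 : ∀ s ∈ Set.Icc A B, ρ s ^ 2 = Real.sqrt (p s * r s) := by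
    intro s hs
    have hprpos : (0:ℝ) < p s * r s := mul_pos (hppos s hs) (hrpos s hs)
    rw [hρ, ← Real.rpow_natCast ((p s * r s) ^ (1/4:ℝ)) 2, ← Real.rpow_mul hprpos.le,
      Real.sqrt_eq_rpow]
    norm_num
  -- the two scalar identities
  have hA1 : ∀ s ∈ Set.Icc A B,
      Real.sqrt (r s / p s) • (f (l s) ^ 2) = g s ^ 2 * (r s : ℂ) := by
    intro s hs
    have hps := hppos s hs; have hrs := hrpos s hs
    have hreal : Real.sqrt (r s / p s) * ρ s ^ 2 = r s := by
      rw [hρ2 s hs, ← Real.sqrt_mul (div_nonneg hrs.le hps.le)]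
      rw [show r s / p s * (p s * r s) = (r s) ^ 2 by field_simp]
      exact Real.sqrt_sq hrs.le
    have hrc := congrArg (Complex.ofReal) hreal
    push_cast at hrc
    rw [hfl s hs, Complex.real_smul, mul_pow, ← hrc]
    ring
  have hA2 : ∀ s ∈ Set.Icc A B,
      Real.sqrt (r s / p s) • (f (l s) ^ 2)⁻¹ = (g s ^ 2 * (p s : ℂ))⁻¹ := by
    intro s hs
    have hps := hppos s hs; have hrs := hrpos s hs
    have hreal : Real.sqrt (r s / p s) * (ρ s ^ 2)⁻¹ = (p s)⁻¹ := by
      rw [hρ2 s hs, ← Real.sqrt_inv, ← Real.sqrt_mul (div_nonneg hrs.le hps.le)]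
      rw [show r s / p s * (p s * r s)⁻¹ = ((p s)⁻¹) ^ 2 by field_simp]
      exact Real.sqrt_sq (inv_nonneg.2 hps.le)
    have hpc := congrArg (Complex.ofReal) hreal
    push_cast at hpc
    rw [hfl s hs, Complex.real_smul, mul_pow, mul_inv, ← mul_assoc, hpc, mul_inv]
    ring
  -- substitution
  have hsubst : ∀ F : ℝ → ℂ, ContinuousOn F (Set.Icc a b) → ∀ y ∈ Set.Icc A B,
      (∫ s in y₀..y, Real.sqrt (r s / p s) • F (l s)) = ∫ u in (l y₀)..(l y), F u := by
    intro F hF y hy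
    have himg : L '' Set.uIcc y₀ y ⊆ Set.Icc a b := by
      rintro _ ⟨x, hx, rfl⟩
      have hxAB := hIccAB hy hx
      rw [hLl x hxAB]; exact hlab x hxAB
    have h1 : (∫ s in y₀..y, q s • (F ∘ L) s) = ∫ u in L y₀..L y, F u :=
      intervalIntegral.integral_comp_smul_deriv' (fun x _ => hLderiv x)
        hqcont.continuousOn (hF.mono himg)
    calc (∫ s in y₀..y, Real.sqrt (r s / p s) • F (l s))
        = ∫ s in y₀..y, q s • (F ∘ L) s := by
          refine intervalIntegral.integral_congr fun s hs => ?_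
          have hsAB := hIccAB hy hs
          simp only [Function.comp, hqeq s hsAB, hLl s hsAB]
      _ = ∫ u in L y₀..L y, F u := h1
      _ = ∫ u in l y₀..l y, F u := by rw [hLl y₀ hy₀, hLl y hy]
  -- main induction
  have key : ∀ n : ℕ, (ContinuousOn (X n) (Set.Icc a b) ∧ ContinuousOn (Xt n) (Set.Icc a b)) ∧
      ∀ y ∈ Set.Icc A B, Y n y = X n (l y) ∧ Yt n y = Xt n (l y) := by
    intro n
    induction n with
    | zero =>
      refine ⟨⟨?_, ?_⟩, fun y hy => ⟨?_, ?_⟩⟩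
      · exact continuousOn_const.congr fun x hx => hX0 x
      · exact continuousOn_const.congr fun x hx => hXt0 x
      · rw [hY0, hX0]
      · rw [hYt0, hXt0]
    | succ n ih =>
      obtain ⟨⟨hXc, hXtc⟩, hval⟩ := ih
      have hf2 : ContinuousOn (fun s => f s ^ 2) (Set.Icc a b) := hfcont.pow 2
      have hFXc : ContinuousOn (fun s => X n s * (f s ^ 2) ^ ((-1:ℤ) ^ (n+1))) (Set.Icc a b) :=
        hXc.mul (hf2.zpow₀ _ fun x hx => Or.inl (pow_ne_zero 2 (hfne x hx)))
      have hFXtc : ContinuousOn (fun s => Xt n s * (f s ^ 2) ^ ((-1:ℤ) ^ n)) (Set.Icc a b) :=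
        hXtc.mul (hf2.zpow₀ _ fun x hx => Or.inl (pow_ne_zero 2 (hfne x hx)))
      have hly₀ : l y₀ ∈ Set.Icc a b := hlab y₀ hy₀
      refine ⟨⟨?_, ?_⟩, ?_⟩
      · exact (continuousOn_const.mul (skfpt_primitive hFXc hly₀)).congr
          fun x hx => hX n x hx
      · exact (continuousOn_const.mul (skfpt_primitive hFXtc hly₀)).congr
          fun x hx => hXt n x hx
      · intro y hy
        rcases Nat.even_or_odd (n+1) with hpar | hpar
        · have hn : Odd n := by
            rcases hpar with ⟨k, hk⟩; exact ⟨k - 1, by omega⟩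
          have he1 : ((-1:ℤ)) ^ (n+1) = 1 := Even.neg_one_pow hpar
          have he0 : ((-1:ℤ)) ^ n = -1 := Odd.neg_one_pow hn
          constructor
          · rw [hY_even n hpar y hy, hX n (l y) (hlab y hy), ← hsubst _ hFXc y hy]
            congr 1
            refine intervalIntegral.integral_congr fun s hs => ?_
            have hsAB := hIccAB hy hs
            rw [(hval s hsAB).1, he1, zpow_one, ← mul_smul_comm, hA1 s hsAB]
          · rw [hYt_even n hpar y hy, hXt n (l y) (hlab y hy), ← hsubst _ hFXtc y hy]
            congr 1
            refine intervalIntegral.integral_congr fun s hs => ?_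
            have hsAB := hIccAB hy hs
            rw [(hval s hsAB).2, he0, zpow_neg_one, ← mul_smul_comm, hA2 s hsAB,
              div_eq_mul_inv]
        · have hn : Even n := by
            rcases hpar with ⟨k, hk⟩; exact ⟨k, by omega⟩
          have he1 : ((-1:ℤ)) ^ (n+1) = -1 := Odd.neg_one_pow hpar
          have he0 : ((-1:ℤ)) ^ n = 1 := Even.neg_one_pow hn
          constructor
          · rw [hY_odd n hpar y hy, hX n (l y) (hlab y hy), ← hsubst _ hFXc y hy]
            congr 1
            refine intervalIntegral.integral_congr fun s hs => ?_
            have hsAB := hIccAB hy hs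
            rw [(hval s hsAB).1, he1, zpow_neg_one, ← mul_smul_comm, hA2 s hsAB,
              div_eq_mul_inv]
          · rw [hYt_odd n hpar y hy, hXt n (l y) (hlab y hy), ← hsubst _ hFXtc y hy]
            congr 1
            refine intervalIntegral.integral_congr fun s hs => ?_
            have hsAB := hIccAB hy hs
            rw [(hval s hsAB).2, he0, zpow_one, ← mul_smul_comm, hA1 s hsAB]
  -- conclusion
  intro n y hy
  have hk := (key n).2 y hy
  refine ⟨fun _ => ?_, fun _ => ?_⟩
  · rw [hk.1, hfl y hy, div_div, mul_comm]
  · rw [hk.2, hfl y hy, div_div, mul_comm]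
end

section
/- Let ω, h ∈ ℂ and let u : [a,b] → ℂ be twice continuously differentiable, satisfy u″(x) − Q(x) u(x) = −ω² u(x) for all x ∈ (a,b), and satisfy u(0) = 1, u′(0) = h. Then the function v₁(y) = u(l(y))/ρ(y) satisfies (p(y) v₁′(y))′ − q(y) v₁(y) = −ω² r(y) v₁(y) for all y ∈ (A,B), together with the initial conditions v₁(y₀) = 1/ρ(y₀) and v₁′(y₀) = −ρ′(y₀)/ρ(y₀)² + (h/ρ(y₀)) √(r(y₀)/p(y₀)). -/
open MeasureTheory


section liouHelpers

variable {P R : ℝ}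

private lemma liou_sq (hx : 0 < P) {c d : ℝ} (hcd : c = 2 * d) :
    P ^ c = ((P ^ (2:ℕ)) : ℝ) ^ (d : ℝ) := by
  rw [← Real.rpow_natCast P 2, ← Real.rpow_mul hx.le, hcd]
  norm_num

private lemma liou_H1 (hP : 0 < P) (hR : 0 < R) :
    P * Real.sqrt (R / P) = (P * R) ^ ((1/2) : ℝ) := by
  rw [Real.sqrt_eq_rpow]
  nth_rewrite 1 [show P = P ^ (1:ℝ) by rw [Real.rpow_one]]
  rw [liou_sq hP (by norm_num : (1:ℝ) = 2 * (1/2)), ← Real.mul_rpow (by positivity) (by positivity),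
    show (P ^ (2:ℕ) : ℝ) * (R / P) = P * R by field_simp]

/-- p * (f * w) = ρ -/
private lemma liou_eI (hP : 0 < P) (hR : 0 < R) :
    P * (Real.sqrt (R / P) * (P * R) ^ (-(1/4) : ℝ)) = (P * R) ^ ((1/4) : ℝ) := by
  rw [← mul_assoc, liou_H1 hP hR, ← Real.rpow_add (by positivity)]
  norm_num

/-- ρ * f * E = 1 -/
private lemma liou_e2 (hP : 0 < P) (hR : 0 < R) :
    (P * R) ^ ((1/4) : ℝ) * Real.sqrt (R / P) * (P / R ^ 3) ^ ((1/4) : ℝ) = 1 := by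
  have hfE : Real.sqrt (R / P) * (P / R ^ 3) ^ ((1/4) : ℝ) = (P * R) ^ (-(1/4) : ℝ) := by
    rw [Real.sqrt_eq_rpow, liou_sq (div_pos hR hP) (by norm_num : (1/2:ℝ) = 2 * (1/4)),
      ← Real.mul_rpow (by positivity) (by positivity),
      show ((R/P) ^ (2:ℕ) : ℝ) * (P / R ^ 3) = (P * R)⁻¹ by field_simp,
      ← Real.rpow_neg_one (P*R), ← Real.rpow_mul (by positivity)]
    norm_num
  rw [mul_assoc, hfE, ← Real.rpow_add (by positivity)]
  norm_num

/-- ρ * f * ρ = R -/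
private lemma liou_e3 (hP : 0 < P) (hR : 0 < R) :
    (P * R) ^ ((1/4) : ℝ) * Real.sqrt (R / P) * (P * R) ^ ((1/4) : ℝ) = R := by
  have h : Real.sqrt (R / P) = (R / P) ^ ((1/2) : ℝ) := Real.sqrt_eq_rpow _
  rw [h, liou_sq (div_pos hR hP) (by norm_num : (1/2:ℝ) = 2 * (1/4)), mul_assoc,
    ← Real.mul_rpow (by positivity) (by positivity),
    ← Real.mul_rpow (by positivity) (by positivity),
    show (P * R) * (((R/P) ^ (2:ℕ) : ℝ) * (P * R)) = R ^ (4:ℕ) by field_simp,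
    ← Real.rpow_natCast R 4, ← Real.rpow_mul hR.le]
  norm_num

/-- ρ' + p * w' * f = 0 -/
private lemma liou_e1 (hP : 0 < P) (hR : 0 < R) (d : ℝ) :
    d * (1/4) * (P * R) ^ ((1/4) - 1 : ℝ) +
      P * (d * (-(1/4)) * (P * R) ^ (-(1/4) - 1 : ℝ)) * Real.sqrt (R / P) = 0 := by
  have h1 : P * Real.sqrt (R / P) = (P * R) ^ ((1/2) : ℝ) := liou_H1 hP hR
  have h2 : (P * R) ^ ((1/2) : ℝ) * (P * R) ^ (-(1/4) - 1 : ℝ) = (P * R) ^ ((1/4) - 1 : ℝ) := by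
    rw [← Real.rpow_add (by positivity)]; norm_num
  linear_combination (d * (-(1/4)) * (P * R) ^ (-(1/4) - 1 : ℝ)) * h1 + (d * (-(1/4))) * h2

/-- w * ρ = 1 -/
private lemma liou_e4 (hP : 0 < P) (hR : 0 < R) :
    (P * R) ^ (-(1/4) : ℝ) * (P * R) ^ ((1/4) : ℝ) = 1 := by
  rw [← Real.rpow_add (by positivity)]; norm_num

/-- w' * ρ² = -ρ' -/
private lemma liou_e5 (hP : 0 < P) (hR : 0 < R) (d : ℝ) :
    d * (-(1/4)) * (P * R) ^ (-(1/4) - 1 : ℝ) * ((P * R) ^ ((1/4) : ℝ)) ^ 2 =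
      -(d * (1/4) * (P * R) ^ ((1/4) - 1 : ℝ)) := by
  rw [← Real.rpow_natCast ((P*R) ^ ((1/4):ℝ)) 2, ← Real.rpow_mul (by positivity),
    mul_assoc, ← Real.rpow_add (by positivity)]
  norm_num

end liouHelpers


theorem transformed_cosine_type_solution
    (A B : ℝ) (hAB : A < B)
    (p r : ℝ → ℝ) (q : ℝ → ℂ)
    (hp : ContDiffOn ℝ 2 p (Set.Icc A B))
    (hr : ContDiffOn ℝ 2 r (Set.Icc A B))
    (hq : ContinuousOn q (Set.Icc A B))
    (hppos : ∀ y ∈ Set.Icc A B, 0 < p y)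
    (hrpos : ∀ y ∈ Set.Icc A B, 0 < r y)
    (y₀ : ℝ) (hy₀ : y₀ ∈ Set.Ioo A B)
    (l : ℝ → ℝ) (hl : ∀ y, l y = ∫ s in y₀..y, Real.sqrt (r s / p s))
    (ρ : ℝ → ℝ) (hρ : ∀ y, ρ y = (p y * r y) ^ (1 / 4 : ℝ))
    (a b : ℝ) (ha : a = l A) (hb : b = l B)
    (hmono : StrictMonoOn l (Set.Icc A B))
    (linv : ℝ → ℝ)
    (hlinv_maps : Set.MapsTo linv (Set.Icc a b) (Set.Icc A B))
    (hlinv_left : ∀ y ∈ Set.Icc A B, linv (l y) = y)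
    (hlinv_right : ∀ x ∈ Set.Icc a b, l (linv x) = x)
    (Q : ℝ → ℂ)
    (hQ : ∀ x, Q x = q (linv x) / (r (linv x) : ℂ) -
      (((p (linv x) / (r (linv x)) ^ 3) ^ (1 / 4 : ℝ) *
        deriv (fun t => p t * deriv (fun s => (p s * r s) ^ (-(1 / 4) : ℝ)) t) (linv x) : ℝ) : ℂ))
    (ω h : ℂ)
    (u : ℝ → ℂ) (hu : ContDiffOn ℝ 2 u (Set.Icc a b))
    (hueq : ∀ x ∈ Set.Ioo a b, deriv (deriv u) x - Q x * u x = -ω ^ 2 * u x)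
    (hu0 : u 0 = 1) (hu'0 : deriv u 0 = h)
    (v₁ : ℝ → ℂ) (hv₁ : ∀ y, v₁ y = u (l y) / (ρ y : ℂ)) :
    (∀ y ∈ Set.Ioo A B,
        deriv (fun t => (p t : ℂ) * deriv v₁ t) y - q y * v₁ y = -ω ^ 2 * (r y : ℂ) * v₁ y) ∧
      v₁ y₀ = 1 / (ρ y₀ : ℂ) ∧
      deriv v₁ y₀ = -Complex.ofReal (deriv ρ y₀) / (ρ y₀ : ℂ) ^ 2 +
        h / (ρ y₀ : ℂ) * (Real.sqrt (r y₀ / p y₀) : ℂ) := by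
  have hsub : Set.Ioo A B ⊆ Set.Icc A B := Set.Ioo_subset_Icc_self
  have hsub' : Set.Ioo a b ⊆ Set.Icc a b := Set.Ioo_subset_Icc_self
  set f : ℝ → ℝ := fun s => Real.sqrt (r s / p s) with hf
  set w : ℝ → ℝ := fun s => (p s * r s) ^ (-(1 / 4) : ℝ) with hw
  -- positivity
  have hpt : ∀ t ∈ Set.Ioo A B, 0 < p t := fun t ht => hppos t (hsub ht)
  have hrt : ∀ t ∈ Set.Ioo A B, 0 < r t := fun t ht => hrpos t (hsub ht)
  -- continuity of f on Icc
  have hfc : ContinuousOn f (Set.Icc A B) := by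
    apply ContinuousOn.sqrt
    exact (hr.continuousOn).div (hp.continuousOn) (fun t ht => (hppos t ht).ne')
  -- derivative of l
  have hld : ∀ t ∈ Set.Ioo A B, HasDerivAt l (f t) t := by
    intro t ht
    have hint : IntervalIntegrable f volume y₀ t := by
      apply ContinuousOn.intervalIntegrable
      apply hfc.mono
      intro s hs
      rcases Set.uIcc_subset_Icc ⟨(hy₀.1).le, (hy₀.2).le⟩ ⟨ht.1.le, ht.2.le⟩ hs with hs'
      exact hs'
    have hmeas : StronglyMeasurableAtFilter f (nhds t) volume :=
      ContinuousOn.stronglyMeasurableAtFilter isOpen_Ioo (hfc.mono hsub) t ht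
    have hca : ContinuousAt f t :=
      (hfc.mono hsub).continuousAt (Ioo_mem_nhds ht.1 ht.2)
    have H := intervalIntegral.integral_hasDerivAt_right hint hmeas hca
    have hlfun : l = fun z => ∫ s in y₀..z, f s := funext hl
    rw [hlfun]
    exact H
  -- l maps Ioo A B into Ioo a b
  have hlmem : ∀ t ∈ Set.Ioo A B, l t ∈ Set.Ioo a b := by
    intro t ht
    constructor
    · rw [ha]; exact hmono (Set.left_mem_Icc.2 hAB.le) (hsub ht) ht.1
    · rw [hb]; exact hmono (hsub ht) (Set.right_mem_Icc.2 hAB.le) ht.2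
  -- differentiability of p and r at interior points
  have hpd : ∀ t ∈ Set.Ioo A B, HasDerivAt p (deriv p t) t := by
    intro t ht
    exact ((hp.differentiableOn two_ne_zero).differentiableAt
      (Icc_mem_nhds ht.1 ht.2)).hasDerivAt
  have hrd : ∀ t ∈ Set.Ioo A B, HasDerivAt r (deriv r t) t := by
    intro t ht
    exact ((hr.differentiableOn two_ne_zero).differentiableAt
      (Icc_mem_nhds ht.1 ht.2)).hasDerivAt
  set dpr : ℝ → ℝ := fun t => deriv p t * r t + p t * deriv r t with hdpr
  have hprd : ∀ t ∈ Set.Ioo A B, HasDerivAt (fun s => p s * r s) (dpr t) t :=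
    fun t ht => (hpd t ht).mul (hrd t ht)
  -- derivative of ρ
  have hρd : ∀ t ∈ Set.Ioo A B,
      HasDerivAt ρ (dpr t * (1/4) * (p t * r t) ^ ((1/4) - 1 : ℝ)) t := by
    intro t ht
    have hne : p t * r t ≠ 0 := (mul_pos (hpt t ht) (hrt t ht)).ne'
    have := (hprd t ht).rpow_const (p := (1/4 : ℝ)) (Or.inl hne)
    have hρfun : ρ = fun s => (p s * r s) ^ (1/4 : ℝ) := funext hρ
    rw [hρfun]
    exact this
  -- derivative of w
  have hwd : ∀ t ∈ Set.Ioo A B,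
      HasDerivAt w (dpr t * (-(1/4)) * (p t * r t) ^ (-(1/4) - 1 : ℝ)) t := by
    intro t ht
    have hne : p t * r t ≠ 0 := (mul_pos (hpt t ht) (hrt t ht)).ne'
    exact (hprd t ht).rpow_const (p := (-(1/4) : ℝ)) (Or.inl hne)
  -- u is differentiable twice at interior points
  have hud : ∀ x ∈ Set.Ioo a b, HasDerivAt u (deriv u x) x := by
    intro x hx
    exact ((hu.differentiableOn two_ne_zero).differentiableAt
      (Icc_mem_nhds hx.1 hx.2)).hasDerivAt
  have hud2 : ∀ x ∈ Set.Ioo a b, HasDerivAt (deriv u) (deriv (deriv u) x) x := by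
    intro x hx
    have h1 : ContDiffOn ℝ 1 (deriv u) (Set.Ioo a b) :=
      (hu.mono hsub').deriv_of_isOpen isOpen_Ioo (by norm_num)
    exact ((h1.differentiableOn one_ne_zero).differentiableAt
      (Ioo_mem_nhds hx.1 hx.2)).hasDerivAt
  -- derivative of v₁ at interior points
  have hv₁d : ∀ t ∈ Set.Ioo A B,
      HasDerivAt v₁ ((f t : ℂ) * deriv u (l t) * (w t : ℂ) +
        u (l t) * ((dpr t * (-(1/4)) * (p t * r t) ^ (-(1/4) - 1 : ℝ) : ℝ) : ℂ)) t := by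
    intro t ht
    have h1 : HasDerivAt (fun s => u (l s)) ((f t) • deriv u (l t)) t :=
      HasDerivAt.scomp t (hud (l t) (hlmem t ht)) (hld t ht)
    have h2 : HasDerivAt (fun s => ((w s : ℝ) : ℂ))
        ((dpr t * (-(1/4)) * (p t * r t) ^ (-(1/4) - 1 : ℝ) : ℝ) : ℂ) t :=
      (hwd t ht).ofReal_comp
    have h3 := h1.mul h2
    have heq : v₁ =ᶠ[nhds t] fun s => u (l s) * ((w s : ℝ) : ℂ) := by
      filter_upwards [Ioo_mem_nhds ht.1 ht.2] with s hs
      rw [hv₁ s, hρ s, div_eq_mul_inv]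
      congr 1
      rw [hw]
      push_cast
      rw [Real.rpow_neg (mul_pos (hpt s hs) (hrt s hs)).le]
      push_cast
      ring
    rw [show ((f t : ℂ) * deriv u (l t) * (w t : ℂ) +
        u (l t) * ((dpr t * (-(1/4)) * (p t * r t) ^ (-(1/4) - 1 : ℝ) : ℝ) : ℂ)) =
        ((f t) • deriv u (l t) * (w t : ℂ) +
        u (l t) * ((dpr t * (-(1/4)) * (p t * r t) ^ (-(1/4) - 1 : ℝ) : ℝ) : ℂ)) from by
      rw [Complex.real_smul]]
    exact h3.congr_of_eventuallyEq heq
  constructor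
  · -- the differential equation
    intro y hy
    have hx : l y ∈ Set.Ioo a b := hlmem y hy
    have hpy := hpt y hy
    have hry := hrt y hy
    -- differentiability of t ↦ p t * deriv w t at y
    have hwCD : ContDiffOn ℝ 2 w (Set.Ioo A B) := by
      intro t ht
      exact (((hp.mono hsub).mul (hr.mono hsub)) t ht).rpow_const_of_ne
        (mul_pos (hpt t ht) (hrt t ht)).ne'
    have hdwCD : ContDiffOn ℝ 1 (deriv w) (Set.Ioo A B) :=
      hwCD.deriv_of_isOpen isOpen_Ioo (by norm_num)
    have hdwy : DifferentiableAt ℝ (deriv w) y :=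
      (hdwCD.differentiableOn one_ne_zero).differentiableAt (Ioo_mem_nhds hy.1 hy.2)
    have hpy' : DifferentiableAt ℝ p y :=
      (hp.differentiableOn two_ne_zero).differentiableAt (Icc_mem_nhds hy.1 hy.2)
    set D := deriv (fun t => p t * deriv w t) y with hD
    have hgd : HasDerivAt (fun t => p t * deriv w t) D y := (hpy'.mul hdwy).hasDerivAt
    have hgd' : HasDerivAt
        (fun t => p t * (dpr t * (-(1/4)) * (p t * r t) ^ (-(1/4) - 1 : ℝ))) D y := by
      apply hgd.congr_of_eventuallyEq
      filter_upwards [Ioo_mem_nhds hy.1 hy.2] with s hs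
      rw [(hwd s hs).deriv]
    -- the auxiliary function H
    set Hfun : ℝ → ℂ := fun t => (ρ t : ℂ) * deriv u (l t) +
      ((p t * (dpr t * (-(1/4)) * (p t * r t) ^ (-(1/4) - 1 : ℝ)) : ℝ) : ℂ) * u (l t)
      with hHfun
    have hFeq : (fun t => (p t : ℂ) * deriv v₁ t) =ᶠ[nhds y] Hfun := by
      filter_upwards [Ioo_mem_nhds hy.1 hy.2] with s hs
      rw [(hv₁d s hs).deriv, hHfun]
      have hI : p s * (f s * w s) = ρ s := by
        rw [hρ s, hf, hw]
        exact liou_eI (hpt s hs) (hrt s hs)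
      have hIc : ((p s : ℝ) : ℂ) * (((f s : ℝ) : ℂ) * ((w s : ℝ) : ℂ)) = ((ρ s : ℝ) : ℂ) := by
        exact_mod_cast hI
      push_cast
      linear_combination (deriv u (l s)) * hIc
    -- derivative of H at y
    have T1 : HasDerivAt (fun t => ((ρ t : ℝ) : ℂ))
        ((dpr y * (1/4) * (p y * r y) ^ ((1/4) - 1 : ℝ) : ℝ) : ℂ) y := (hρd y hy).ofReal_comp
    have T2 : HasDerivAt (fun t => deriv u (l t)) ((f y) • deriv (deriv u) (l y)) y :=
      HasDerivAt.scomp y (hud2 (l y) hx) (hld y hy)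
    have T4 : HasDerivAt
        (fun t => ((p t * (dpr t * (-(1/4)) * (p t * r t) ^ (-(1/4) - 1 : ℝ)) : ℝ) : ℂ))
        ((D : ℝ) : ℂ) y := hgd'.ofReal_comp
    have T5 : HasDerivAt (fun t => u (l t)) ((f y) • deriv u (l y)) y :=
      HasDerivAt.scomp y (hud (l y) hx) (hld y hy)
    have hH : HasDerivAt Hfun
        (((dpr y * (1/4) * (p y * r y) ^ ((1/4) - 1 : ℝ) : ℝ) : ℂ) * deriv u (l y) +
          ((ρ y : ℝ) : ℂ) * ((f y) • deriv (deriv u) (l y)) +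
         (((D : ℝ) : ℂ) * u (l y) +
          ((p y * (dpr y * (-(1/4)) * (p y * r y) ^ (-(1/4) - 1 : ℝ)) : ℝ) : ℂ) *
            ((f y) • deriv u (l y)))) y := (T1.mul T2).add (T4.mul T5)
    have hderiv_eq : deriv (fun t => (p t : ℂ) * deriv v₁ t) y =
        (((dpr y * (1/4) * (p y * r y) ^ ((1/4) - 1 : ℝ) : ℝ) : ℂ) * deriv u (l y) +
          ((ρ y : ℝ) : ℂ) * ((f y) • deriv (deriv u) (l y)) +
         (((D : ℝ) : ℂ) * u (l y) +
          ((p y * (dpr y * (-(1/4)) * (p y * r y) ^ (-(1/4) - 1 : ℝ)) : ℝ) : ℂ) *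
            ((f y) • deriv u (l y)))) := by
      rw [hFeq.deriv_eq]
      exact hH.deriv
    -- the second derivative of u from the ODE
    have hu'' : deriv (deriv u) (l y) = Q (l y) * u (l y) - ω ^ 2 * u (l y) := by
      linear_combination (hueq (l y) hx)
    have hQx : Q (l y) = q y / (r y : ℂ) -
        (((p y / (r y) ^ 3) ^ (1 / 4 : ℝ) : ℝ) : ℂ) * ((D : ℝ) : ℂ) := by
      rw [hQ (l y), hlinv_left y (hsub hy), hD]
      push_cast
      ring
    -- real algebraic identities
    have he1 : dpr y * (1/4) * (p y * r y) ^ ((1/4) - 1 : ℝ) +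
        p y * (dpr y * (-(1/4)) * (p y * r y) ^ (-(1/4) - 1 : ℝ)) * f y = 0 :=
      liou_e1 hpy hry (dpr y)
    have he2 : ρ y * f y * (p y / r y ^ 3) ^ ((1/4) : ℝ) = 1 := by
      rw [hρ y, hf]; exact liou_e2 hpy hry
    have he3 : ρ y * f y * ρ y = r y := by
      rw [hρ y, hf]; exact liou_e3 hpy hry
    have hρ0 : ((ρ y : ℝ) : ℂ) ≠ 0 := by
      rw [hρ y]
      exact_mod_cast (Real.rpow_pos_of_pos (mul_pos hpy hry) _).ne'
    have hr0 : ((r y : ℝ) : ℂ) ≠ 0 := by exact_mod_cast hry.ne'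
    -- cast the identities to ℂ
    have hc1 : ((dpr y * (1/4) * (p y * r y) ^ ((1/4) - 1 : ℝ) : ℝ) : ℂ) +
        ((p y * (dpr y * (-(1/4)) * (p y * r y) ^ (-(1/4) - 1 : ℝ)) : ℝ) : ℂ) *
          ((f y : ℝ) : ℂ) = 0 := by exact_mod_cast congrArg (Complex.ofReal) he1
    have hc2 : ((ρ y : ℝ) : ℂ) * ((f y : ℝ) : ℂ) *
        (((p y / r y ^ 3) ^ ((1/4) : ℝ) : ℝ) : ℂ) = 1 := by
      exact_mod_cast congrArg (Complex.ofReal) he2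
    have hc3 : ((ρ y : ℝ) : ℂ) * ((f y : ℝ) : ℂ) * ((ρ y : ℝ) : ℂ) = ((r y : ℝ) : ℂ) := by
      exact_mod_cast congrArg (Complex.ofReal) he3
    have hc3b : ((ρ y : ℝ) : ℂ) * ((f y : ℝ) : ℂ) / ((r y : ℝ) : ℂ) = 1 / ((ρ y : ℝ) : ℂ) := by
      field_simp
      linear_combination hc3
    have hc3c : ((r y : ℝ) : ℂ) / ((ρ y : ℝ) : ℂ) = ((ρ y : ℝ) : ℂ) * ((f y : ℝ) : ℂ) := by
      rw [div_eq_iff hρ0, eq_comm]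
      linear_combination hc3
    rw [hderiv_eq, hv₁ y, hu'', hQx]
    simp only [Complex.real_smul]
    linear_combination (deriv u (l y)) * hc1 - (u (l y) * ((D : ℝ) : ℂ)) * hc2 +
      (q y * u (l y)) * hc3b + (ω ^ 2 * u (l y)) * hc3c
  -- initial conditions
  have hl0 : l y₀ = 0 := by rw [hl]; exact intervalIntegral.integral_same
  have hp0 := hpt y₀ hy₀
  have hr0' := hrt y₀ hy₀
  have hρpos : 0 < ρ y₀ := by
    rw [hρ]; exact Real.rpow_pos_of_pos (mul_pos hp0 hr0') _
  have hρne : ((ρ y₀ : ℝ) : ℂ) ≠ 0 := by exact_mod_cast hρpos.ne'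
  constructor
  · rw [hv₁ y₀, hl0, hu0]
  · have hd := hv₁d y₀ hy₀
    rw [hd.deriv, hl0, hu0, hu'0, (hρd y₀ hy₀).deriv]
    have he4 : w y₀ * ρ y₀ = 1 := by
      rw [hw, hρ]; exact liou_e4 hp0 hr0'
    have he5 : dpr y₀ * (-(1/4)) * (p y₀ * r y₀) ^ (-(1/4) - 1 : ℝ) * (ρ y₀) ^ 2 =
        -(dpr y₀ * (1/4) * (p y₀ * r y₀) ^ ((1/4) - 1 : ℝ)) := by
      rw [hρ]; exact liou_e5 hp0 hr0' (dpr y₀)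
    have hc4 : ((w y₀ : ℝ) : ℂ) = 1 / ((ρ y₀ : ℝ) : ℂ) := by
      rw [eq_div_iff hρne]
      exact_mod_cast congrArg (Complex.ofReal) he4
    have hc5 : ((dpr y₀ * (-(1/4)) * (p y₀ * r y₀) ^ (-(1/4) - 1 : ℝ) : ℝ) : ℂ) =
        -((dpr y₀ * (1/4) * (p y₀ * r y₀) ^ ((1/4) - 1 : ℝ) : ℝ) : ℂ) / ((ρ y₀ : ℝ) : ℂ) ^ 2 := by
      rw [eq_div_iff (pow_ne_zero 2 hρne)]
      have := congrArg (Complex.ofReal) he5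
      push_cast at this ⊢
      linear_combination this
    rw [hc4, hc5]
    ring
end

section
/- Let ω ∈ ℂ and let u : [a,b] → ℂ be twice continuously differentiable, satisfy u″(x) − Q(x) u(x) = −ω² u(x) for all x ∈ (a,b), and satisfy u(0) = 0, u′(0) = 1. Then the function v₂(y) = u(l(y))/ρ(y) satisfies (p(y) v₂′(y))′ − q(y) v₂(y) = −ω² r(y) v₂(y) for all y ∈ (A,B), together with the initial conditions v₂(y₀) = 0 and v₂′(y₀) = (1/ρ(y₀)) √(r(y₀)/p(y₀)). -/
open MeasureTheory Topology

lemma aux_pow_eq {n : ℕ} (hn : 0 < n) {x y : ℝ} (hx : 0 ≤ x) (hy : 0 ≤ y) (h : x ^ n = y ^ n) : x = y := by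
  calc x = (x ^ n) ^ ((n:ℝ)⁻¹) := by
        rw [← Real.rpow_natCast x n, ← Real.rpow_mul hx, mul_inv_cancel₀ (by exact_mod_cast hn.ne'), Real.rpow_one]
    _ = (y ^ n) ^ ((n:ℝ)⁻¹) := by rw [h]
    _ = y := by rw [← Real.rpow_natCast y n, ← Real.rpow_mul hy, mul_inv_cancel₀ (by exact_mod_cast hn.ne'), Real.rpow_one]

lemma aux_facts (P R : ℝ) (hP : 0 < P) (hR : 0 < R) :
    ((P*R) ^ (1/4:ℝ))^4 = P*R ∧ P * Real.sqrt (R/P) = ((P*R) ^ (1/4:ℝ))^2 ∧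
    ((P*R) ^ (1/4:ℝ))^2 * Real.sqrt (R/P) = R ∧ (P/R^3) ^ (1/4:ℝ) * R = (P*R) ^ (1/4:ℝ) := by
  have hx : (0:ℝ) < P*R := mul_pos hP hR
  have h4 : ((P*R) ^ (1/4:ℝ))^4 = P*R := by
    rw [← Real.rpow_natCast ((P*R) ^ (1/4:ℝ)) 4, ← Real.rpow_mul hx.le]
    norm_num
  have hρpos : 0 < (P*R) ^ (1/4:ℝ) := Real.rpow_pos_of_pos hx _
  have hM : P * Real.sqrt (R/P) = ((P*R) ^ (1/4:ℝ))^2 := by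
    refine aux_pow_eq (n := 2) (by norm_num) (by positivity) (by positivity) ?_
    rw [mul_pow, Real.sq_sqrt (by positivity), ← pow_mul]
    rw [show 2*2 = 4 by norm_num, h4]
    field_simp
  have hρS : ((P*R) ^ (1/4:ℝ))^2 * Real.sqrt (R/P) = R := by
    rw [← hM, mul_assoc, Real.mul_self_sqrt (by positivity)]
    field_simp
  have hc : (P/R^3) ^ (1/4:ℝ) * R = (P*R) ^ (1/4:ℝ) := by
    refine aux_pow_eq (n := 4) (by norm_num) (by positivity) (by positivity) ?_
    rw [mul_pow, h4, ← Real.rpow_natCast ((P/R^3) ^ (1/4:ℝ)) 4, ← Real.rpow_mul (by positivity)]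
    norm_num
    field_simp
  exact ⟨h4, hM, hρS, hc⟩

theorem transformed_sine_type_solution
    (A B : ℝ) (hAB : A < B)
    (p r : ℝ → ℝ) (q : ℝ → ℂ)
    (hp : ContDiffOn ℝ 2 p (Set.Icc A B))
    (hr : ContDiffOn ℝ 2 r (Set.Icc A B))
    (hq : ContinuousOn q (Set.Icc A B))
    (hppos : ∀ y ∈ Set.Icc A B, 0 < p y)
    (hrpos : ∀ y ∈ Set.Icc A B, 0 < r y)
    (y₀ : ℝ) (hy₀ : y₀ ∈ Set.Ioo A B)
    (l : ℝ → ℝ) (hl : ∀ y, l y = ∫ s in y₀..y, Real.sqrt (r s / p s))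
    (ρ : ℝ → ℝ) (hρ : ∀ y, ρ y = (p y * r y) ^ (1 / 4 : ℝ))
    (a b : ℝ) (ha : a = l A) (hb : b = l B)
    (hmono : StrictMonoOn l (Set.Icc A B))
    (linv : ℝ → ℝ)
    (hlinv_maps : Set.MapsTo linv (Set.Icc a b) (Set.Icc A B))
    (hlinv_left : ∀ y ∈ Set.Icc A B, linv (l y) = y)
    (hlinv_right : ∀ x ∈ Set.Icc a b, l (linv x) = x)
    (Q : ℝ → ℂ)
    (hQ : ∀ x, Q x = q (linv x) / (r (linv x) : ℂ) -
      (((p (linv x) / (r (linv x)) ^ 3) ^ (1 / 4 : ℝ) *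
        deriv (fun t => p t * deriv (fun s => (p s * r s) ^ (-(1 / 4) : ℝ)) t) (linv x) : ℝ) : ℂ))
    (ω : ℂ)
    (u : ℝ → ℂ) (hu : ContDiffOn ℝ 2 u (Set.Icc a b))
    (hueq : ∀ x ∈ Set.Ioo a b, deriv (deriv u) x - Q x * u x = -ω ^ 2 * u x)
    (hu0 : u 0 = 0) (hu'0 : deriv u 0 = 1)
    (v₂ : ℝ → ℂ) (hv₂ : ∀ y, v₂ y = u (l y) / (ρ y : ℂ)) :
    (∀ y ∈ Set.Ioo A B,
        deriv (fun t => (p t : ℂ) * deriv v₂ t) y - q y * v₂ y = -ω ^ 2 * (r y : ℂ) * v₂ y) ∧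
      v₂ y₀ = 0 ∧
      deriv v₂ y₀ = 1 / (ρ y₀ : ℂ) * (Real.sqrt (r y₀ / p y₀) : ℂ) := by
  set g : ℝ → ℝ := fun s => (p s * r s) ^ (-(1 / 4) : ℝ) with hgdef
  set w : ℝ → ℝ := fun t => p t * deriv g t with hwdef
  have hy₀I : y₀ ∈ Set.Icc A B := Set.Ioo_subset_Icc_self hy₀
  have hl0 : l y₀ = 0 := by rw [hl, intervalIntegral.integral_same]
  have hsub : Set.Ioo A B ⊆ Set.Icc A B := Set.Ioo_subset_Icc_self
  have hpc : ContinuousOn p (Set.Icc A B) := hp.continuousOn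
  have hrc : ContinuousOn r (Set.Icc A B) := hr.continuousOn
  have hfc : ContinuousOn (fun s => Real.sqrt (r s / p s)) (Set.Icc A B) :=
    Real.continuous_sqrt.comp_continuousOn (hrc.div hpc fun x hx => (hppos x hx).ne')
  -- derivative of l
  have hld : ∀ y ∈ Set.Ioo A B, HasDerivAt l (Real.sqrt (r y / p y)) y := by
    intro y hy
    have hnh : Set.Icc A B ∈ 𝓝 y := Icc_mem_nhds hy.1 hy.2
    have h1 : IntervalIntegrable (fun s => Real.sqrt (r s / p s)) volume y₀ y :=
      (hfc.mono (Set.uIcc_subset_Icc hy₀I (hsub hy))).intervalIntegrable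
    have h2 := (hfc.mono hsub).stronglyMeasurableAtFilter isOpen_Ioo y hy (μ := volume)
    have h3 : ContinuousAt (fun s => Real.sqrt (r s / p s)) y :=
      (hfc.continuousWithinAt (hsub hy)).continuousAt hnh
    have hfun : l = fun x => ∫ s in y₀..x, Real.sqrt (r s / p s) := funext hl
    rw [hfun]
    exact intervalIntegral.integral_hasDerivAt_right h1 h2 h3
  -- l maps into Ioo a b
  have hAmem : A ∈ Set.Icc A B := Set.left_mem_Icc.mpr hAB.le
  have hBmem : B ∈ Set.Icc A B := Set.right_mem_Icc.mpr hAB.le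
  have hlmap : ∀ y ∈ Set.Ioo A B, l y ∈ Set.Ioo a b := fun y hy =>
    ⟨ha ▸ hmono hAmem (hsub hy) hy.1, hb ▸ hmono (hsub hy) hBmem hy.2⟩
  -- u facts
  have huIoo : ContDiffOn ℝ 2 u (Set.Ioo a b) := hu.mono Set.Ioo_subset_Icc_self
  have hu' : ContDiffOn ℝ 1 (deriv u) (Set.Ioo a b) := huIoo.deriv_of_isOpen isOpen_Ioo (by norm_num)
  have hudiff : ∀ x ∈ Set.Ioo a b, HasDerivAt u (deriv u x) x := fun x hx =>
    ((huIoo.differentiableOn (by norm_num)).differentiableAt (isOpen_Ioo.mem_nhds hx)).hasDerivAt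
  have hu'diff : ∀ x ∈ Set.Ioo a b, HasDerivAt (deriv u) (deriv (deriv u) x) x := fun x hx =>
    ((hu'.differentiableOn (by norm_num)).differentiableAt (isOpen_Ioo.mem_nhds hx)).hasDerivAt
  -- ρ and g smoothness
  have hρfun : ρ = fun t => (p t * r t) ^ (1/4:ℝ) := funext hρ
  have hprC : ∀ y ∈ Set.Ioo A B, ContDiffAt ℝ 2 (fun t => p t * r t) y := fun y hy =>
    (hp.contDiffAt (Icc_mem_nhds hy.1 hy.2)).mul (hr.contDiffAt (Icc_mem_nhds hy.1 hy.2))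
  have hprpos : ∀ y ∈ Set.Ioo A B, 0 < p y * r y := fun y hy =>
    mul_pos (hppos y (hsub hy)) (hrpos y (hsub hy))
  have hρC : ∀ y ∈ Set.Ioo A B, ContDiffAt ℝ 2 ρ y := by
    intro y hy
    rw [hρfun]
    exact (hprC y hy).rpow_const_of_ne (hprpos y hy).ne'
  have hgC : ∀ y ∈ Set.Ioo A B, ContDiffAt ℝ 2 g y := fun y hy =>
    (hprC y hy).rpow_const_of_ne (hprpos y hy).ne'
  have hρOn : ContDiffOn ℝ 2 ρ (Set.Ioo A B) := fun y hy => (hρC y hy).contDiffWithinAt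
  have hgOn : ContDiffOn ℝ 2 g (Set.Ioo A B) := fun y hy => (hgC y hy).contDiffWithinAt
  have hg' : ContDiffOn ℝ 1 (deriv g) (Set.Ioo A B) := hgOn.deriv_of_isOpen isOpen_Ioo (by norm_num)
  have hρd : ∀ y ∈ Set.Ioo A B, HasDerivAt ρ (deriv ρ y) y := fun y hy =>
    ((hρC y hy).differentiableAt (by norm_num)).hasDerivAt
  have hρpos : ∀ y ∈ Set.Ioo A B, 0 < ρ y := fun y hy => by
    rw [hρ]; exact Real.rpow_pos_of_pos (hprpos y hy) _
  have hwd : ∀ y ∈ Set.Ioo A B, HasDerivAt w (deriv w y) y := by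
    intro y hy
    have h1 : DifferentiableAt ℝ p y := (hp.contDiffAt (Icc_mem_nhds hy.1 hy.2)).differentiableAt (by norm_num)
    have h2 : DifferentiableAt ℝ (deriv g) y :=
      (hg'.differentiableOn (by norm_num)).differentiableAt (isOpen_Ioo.mem_nhds hy)
    exact ((h1.mul h2).hasDerivAt)
  -- g = ρ⁻¹ on Ioo
  have hgρ : ∀ t ∈ Set.Ioo A B, g t = (ρ t)⁻¹ := by
    intro t ht
    show (p t * r t) ^ (-(1/4) : ℝ) = (ρ t)⁻¹
    rw [hρ t, ← Real.rpow_neg (hprpos t ht).le]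
  have hdg : ∀ t ∈ Set.Ioo A B, deriv g t = -(deriv ρ t) / (ρ t)^2 := by
    intro t ht
    have hev : g =ᶠ[nhds t] (fun s => (ρ s)⁻¹) := by
      filter_upwards [isOpen_Ioo.mem_nhds ht] with s hs using hgρ s hs
    rw [hev.deriv_eq]
    exact ((hρd t ht).inv (hρpos t ht).ne').deriv
  -- the fundamental derivative of v₂
  have hv₂fun : v₂ = fun t => u (l t) * ((ρ t : ℂ))⁻¹ := funext fun t => by
    rw [hv₂ t, div_eq_mul_inv]
  have key : ∀ y ∈ Set.Ioo A B, HasDerivAt v₂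
      (Real.sqrt (r y / p y) • deriv u (l y) * ((ρ y : ℂ))⁻¹ +
        u (l y) * ((-(deriv ρ y) / (ρ y)^2 : ℝ) : ℂ)) y := by
    intro y hy
    have hcomp : HasDerivAt (fun t => u (l t)) (Real.sqrt (r y / p y) • deriv u (l y)) y := by
      simpa [Function.comp_def] using (hudiff _ (hlmap y hy)).scomp y (hld y hy)
    have hinv : HasDerivAt (fun t => ((ρ t : ℂ))⁻¹) ((-(deriv ρ y) / (ρ y)^2 : ℝ) : ℂ) y := by
      simpa [Complex.ofReal_inv] using ((hρd y hy).inv (hρpos y hy).ne').ofReal_comp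
    rw [hv₂fun]
    exact hcomp.mul hinv
  refine ⟨?_, ?_, ?_⟩
  · -- the ODE
    intro y hy
    have hyI : y ∈ Set.Icc A B := hsub hy
    obtain ⟨h4, hM, hρS, hcR⟩ := aux_facts (p y) (r y) (hppos y hyI) (hrpos y hyI)
    rw [← hρ y] at h4 hM hρS hcR
    have hHev : (fun t => ((p t : ℂ)) * deriv v₂ t) =ᶠ[𝓝 y]
        (fun t => ((ρ t : ℂ)) * deriv u (l t) + ((w t : ℝ) : ℂ) * u (l t)) := by
      filter_upwards [isOpen_Ioo.mem_nhds hy] with t ht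
      rw [(key t ht).deriv]
      obtain ⟨_, hMt, _, _⟩ := aux_facts (p t) (r t) (hppos t (hsub ht)) (hrpos t (hsub ht))
      rw [← hρ t] at hMt
      have hMt' : ((p t : ℝ) : ℂ) * ((Real.sqrt (r t / p t) : ℝ) : ℂ) = (((ρ t : ℝ)) : ℂ)^2 := by
        exact_mod_cast congrArg (fun x : ℝ => (x : ℂ)) hMt
      have hwt : w t = p t * (-(deriv ρ t) / (ρ t)^2) := by
        show p t * deriv g t = _
        rw [hdg t ht]
      have hρt0 : (((ρ t : ℝ)) : ℂ) ≠ 0 := by exact_mod_cast (hρpos t ht).ne'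
      rw [Complex.real_smul, hwt]
      push_cast
      generalize hSg : ((Real.sqrt (r t / p t) : ℝ) : ℂ) = S at hMt' ⊢
      field_simp
      linear_combination (deriv u (l t) * ((ρ t : ℝ) : ℂ)) * hMt'
    have hld' := hld y hy
    have hDρ : HasDerivAt (fun t => ((ρ t : ℝ) : ℂ)) ((deriv ρ y : ℝ) : ℂ) y := (hρd y hy).ofReal_comp
    have hDu' : HasDerivAt (fun t => deriv u (l t)) (Real.sqrt (r y / p y) • deriv (deriv u) (l y)) y := by
      simpa [Function.comp_def] using (hu'diff _ (hlmap y hy)).scomp y hld'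
    have hDw : HasDerivAt (fun t => ((w t : ℝ) : ℂ)) ((deriv w y : ℝ) : ℂ) y := (hwd y hy).ofReal_comp
    have hDul : HasDerivAt (fun t => u (l t)) (Real.sqrt (r y / p y) • deriv u (l y)) y := by
      simpa [Function.comp_def] using (hudiff _ (hlmap y hy)).scomp y hld'
    have hH : HasDerivAt (fun t => ((ρ t : ℝ) : ℂ) * deriv u (l t) + ((w t : ℝ) : ℂ) * u (l t)) _ y :=
      (hDρ.mul hDu').add (hDw.mul hDul)
    rw [hHev.deriv_eq, hH.deriv]
    have hU'' : deriv (deriv u) (l y) = Q (l y) * u (l y) - ω^2 * u (l y) := by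
      linear_combination hueq (l y) (hlmap y hy)
    have hQy : Q (l y) = q y / ((r y : ℝ) : ℂ) -
        (((p y / (r y)^3) ^ (1/4:ℝ) * deriv w y : ℝ) : ℂ) := by
      rw [hQ (l y), hlinv_left y hyI]
    have hρ0 : ρ y ≠ 0 := (hρpos y hy).ne'
    have hWS : w y * Real.sqrt (r y / p y) = -(deriv ρ y) := by
      show p y * deriv g y * _ = _
      rw [hdg y hy]
      field_simp
      linear_combination (-(deriv ρ y)) * hM
    have c1 : ((w y : ℝ) : ℂ) * ((Real.sqrt (r y / p y) : ℝ) : ℂ) = -(((deriv ρ y : ℝ)) : ℂ) := by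
      exact_mod_cast congrArg (fun x : ℝ => (x : ℂ)) hWS
    have c2 : (((ρ y : ℝ)) : ℂ)^2 * ((Real.sqrt (r y / p y) : ℝ) : ℂ) = ((r y : ℝ) : ℂ) := by
      exact_mod_cast congrArg (fun x : ℝ => (x : ℂ)) hρS
    have c3 : ((((p y / (r y)^3) ^ (1/4:ℝ) : ℝ)) : ℂ) * ((r y : ℝ) : ℂ) = (((ρ y : ℝ)) : ℂ) := by
      exact_mod_cast congrArg (fun x : ℝ => (x : ℂ)) hcR
    have hρ0' : (((ρ y : ℝ)) : ℂ) ≠ 0 := by exact_mod_cast hρ0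
    have hr0' : ((r y : ℝ) : ℂ) ≠ 0 := by exact_mod_cast (hrpos y hyI).ne'
    rw [hv₂ y, hU'', hQy, Complex.real_smul, Complex.real_smul]
    push_cast
    generalize hS0 : ((Real.sqrt (r y / p y) : ℝ) : ℂ) = S at c1 c2 ⊢
    generalize hW0 : ((w y : ℝ) : ℂ) = W at c1 ⊢
    generalize hq0 : ((((p y / (r y)^3) ^ (1/4:ℝ) : ℝ)) : ℂ) = cq at c3 ⊢
    have hS : S = ((r y : ℝ) : ℂ) / (((ρ y : ℝ)) : ℂ)^2 := by
      rw [eq_div_iff (pow_ne_zero 2 hρ0')]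
      linear_combination c2
    have hcq : cq = (((ρ y : ℝ)) : ℂ) / ((r y : ℝ) : ℂ) := by
      rw [eq_div_iff hr0']
      linear_combination c3
    rw [hS] at c1
    have hW : W = -(((deriv ρ y : ℝ) : ℂ) * (((ρ y : ℝ)) : ℂ)^2) / ((r y : ℝ) : ℂ) := by
      rw [eq_div_iff hr0']
      field_simp at c1
      linear_combination c1
    rw [hS, hcq, hW]
    field_simp
    ring_nf
  · rw [hv₂ y₀, hl0, hu0, zero_div]
  · have h := (key y₀ hy₀).deriv
    rw [h, hl0, hu0, hu'0, Complex.real_smul]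
    ring
end

section
/- Define ρ̂ : [a,b] → ℝ by ρ̂(x) = ρ(l⁻¹(x)). Then for every y in the interior of [A,B], the potential Q of the Liouville transformation admits the representation Q(l(y)) = q(y)/r(y) + ρ̂″(l(y))/ρ(y); equivalently, −(r(y)⁻³ p(y))^{1/4} · (p(y) · ((p r)^{−1/4})′(y))′ = ρ̂″(l(y))/ρ(y). -/
open MeasureTheory

theorem potential_Q_alternative_representation
    (A B : ℝ) (hAB : A < B)
    (p r : ℝ → ℝ) (q : ℝ → ℂ)
    (hp : ContDiffOn ℝ 2 p (Set.Icc A B))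
    (hr : ContDiffOn ℝ 2 r (Set.Icc A B))
    (hq : ContinuousOn q (Set.Icc A B))
    (hppos : ∀ y ∈ Set.Icc A B, 0 < p y)
    (hrpos : ∀ y ∈ Set.Icc A B, 0 < r y)
    (y₀ : ℝ) (hy₀ : y₀ ∈ Set.Icc A B)
    (l : ℝ → ℝ) (hl : ∀ y, l y = ∫ s in y₀..y, Real.sqrt (r s / p s))
    (ρ : ℝ → ℝ) (hρ : ∀ y, ρ y = (p y * r y) ^ (1 / 4 : ℝ))
    (a b : ℝ) (ha : a = l A) (hb : b = l B)
    (hmono : StrictMonoOn l (Set.Icc A B))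
    (linv : ℝ → ℝ)
    (hlinv_maps : Set.MapsTo linv (Set.Icc a b) (Set.Icc A B))
    (hlinv_left : ∀ y ∈ Set.Icc A B, linv (l y) = y)
    (hlinv_right : ∀ x ∈ Set.Icc a b, l (linv x) = x)
    (Q : ℝ → ℂ)
    (hQ : ∀ x, Q x = q (linv x) / (r (linv x) : ℂ) -
      (((p (linv x) / (r (linv x)) ^ 3) ^ (1 / 4 : ℝ) *
        deriv (fun t => p t * deriv (fun s => (p s * r s) ^ (-(1 / 4) : ℝ)) t) (linv x) : ℝ) : ℂ))
    (ρhat : ℝ → ℝ) (hρhat : ∀ x, ρhat x = ρ (linv x)) :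
    ∀ y ∈ Set.Ioo A B,
      Q (l y) = q y / (r y : ℂ) + Complex.ofReal (deriv (deriv ρhat) (l y) / ρ y) ∧
      -((p y / r y ^ 3) ^ (1 / 4 : ℝ) *
          deriv (fun t => p t * deriv (fun s => (p s * r s) ^ (-(1 / 4) : ℝ)) t) y) =
        deriv (deriv ρhat) (l y) / ρ y := by
  intro y hy
  have hyI : y ∈ Set.Icc A B := Set.Ioo_subset_Icc_self hy
  have hSopen : IsOpen (Set.Ioo A B) := isOpen_Ioo
  have hSsub : Set.Ioo A B ⊆ Set.Icc A B := Set.Ioo_subset_Icc_self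
  set w : ℝ → ℝ := fun t => Real.sqrt (r t / p t) with hwdef
  have hwpos : ∀ t ∈ Set.Icc A B, 0 < w t := fun t ht =>
    Real.sqrt_pos.2 (div_pos (hrpos t ht) (hppos t ht))
  have hρpos : ∀ t ∈ Set.Icc A B, 0 < ρ t := fun t ht => by
    rw [hρ t]; exact Real.rpow_pos_of_pos (mul_pos (hppos t ht) (hrpos t ht)) _
  have hwcontOn : ContinuousOn w (Set.Icc A B) :=
    Real.continuous_sqrt.comp_continuousOn
      (hr.continuousOn.div hp.continuousOn fun t ht => (hppos t ht).ne')
  have hleq : l = fun x => ∫ s in y₀..x, w s := funext hl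
  -- derivative of l
  have hl' : ∀ t ∈ Set.Ioo A B, HasDerivAt l (w t) t := by
    intro t ht
    rw [hleq]
    have hint : IntervalIntegrable w volume y₀ t :=
      (hwcontOn.mono (Set.uIcc_subset_Icc hy₀ (hSsub ht))).intervalIntegrable
    have hmeas : StronglyMeasurableAtFilter w (nhds t) volume :=
      ContinuousOn.stronglyMeasurableAtFilter hSopen (hwcontOn.mono hSsub) t ht
    exact intervalIntegral.integral_hasDerivAt_right hint hmeas
      (hwcontOn.continuousAt (Icc_mem_nhds ht.1 ht.2))
  -- l maps interior to interior
  have hlmem : ∀ t ∈ Set.Ioo A B, l t ∈ Set.Ioo a b := fun t ht =>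
    ⟨ha ▸ hmono (Set.left_mem_Icc.2 hAB.le) (hSsub ht) ht.1,
     hb ▸ hmono (hSsub ht) (Set.right_mem_Icc.2 hAB.le) ht.2⟩
  -- continuity of linv at points l t
  have hlinv_contAt : ∀ t ∈ Set.Ioo A B, ContinuousAt linv (l t) := by
    intro t ht
    have hlt := hlmem t ht
    rw [ContinuousAt, hlinv_left t (hSsub ht), tendsto_order]
    constructor
    · intro c hc
      rcases lt_or_ge c A with hcA | hAc
      · filter_upwards [Ioo_mem_nhds hlt.1 hlt.2] with x hx
        exact lt_of_lt_of_le hcA (hlinv_maps (Set.Ioo_subset_Icc_self hx)).1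
      · have hmc : c < (c + t) / 2 := by linarith
        have hmt : (c + t) / 2 < t := by linarith
        have hmI : (c + t) / 2 ∈ Set.Icc A B := ⟨by linarith, by linarith [ht.2]⟩
        have hlm : l ((c + t) / 2) < l t := hmono hmI (hSsub ht) hmt
        filter_upwards [Ioo_mem_nhds hlm hlt.2] with x hx
        have hxab : x ∈ Set.Icc a b :=
          ⟨le_trans (ha ▸ hmono.monotoneOn (Set.left_mem_Icc.2 hAB.le) hmI hmI.1) hx.1.le,
           hx.2.le⟩
        have hgt : (c + t) / 2 < linv x := by
          by_contra h
          push_neg at h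
          have h2 := hmono.monotoneOn (hlinv_maps hxab) hmI h
          rw [hlinv_right x hxab] at h2
          exact absurd hx.1 (not_lt.2 h2)
        exact hmc.trans hgt
    · intro c hc
      rcases lt_or_ge B c with hBc | hcB
      · filter_upwards [Ioo_mem_nhds hlt.1 hlt.2] with x hx
        exact lt_of_le_of_lt (hlinv_maps (Set.Ioo_subset_Icc_self hx)).2 hBc
      · have hmc : (t + c) / 2 < c := by linarith
        have hmt : t < (t + c) / 2 := by linarith
        have hmI : (t + c) / 2 ∈ Set.Icc A B := ⟨by linarith [ht.1], by linarith⟩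
        have hlm : l t < l ((t + c) / 2) := hmono (hSsub ht) hmI hmt
        filter_upwards [Ioo_mem_nhds hlt.1 hlm] with x hx
        have hxab : x ∈ Set.Icc a b :=
          ⟨hx.1.le,
           le_trans hx.2.le (hb ▸ hmono.monotoneOn hmI (Set.right_mem_Icc.2 hAB.le) hmI.2)⟩
        have hlt2 : linv x < (t + c) / 2 := by
          by_contra h
          push_neg at h
          have h2 := hmono.monotoneOn hmI (hlinv_maps hxab) h
          rw [hlinv_right x hxab] at h2
          exact absurd hx.2 (not_lt.2 h2)
        exact hlt2.trans hmc
  -- derivative of linv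
  have hlinv' : ∀ t ∈ Set.Ioo A B, HasDerivAt linv (w t)⁻¹ (l t) := by
    intro t ht
    have hlt := hlmem t ht
    have h1 : HasDerivAt l (w t) (linv (l t)) := by
      rw [hlinv_left t (hSsub ht)]; exact hl' t ht
    have h2 : ∀ᶠ x in nhds (l t), l (linv x) = x := by
      filter_upwards [Icc_mem_nhds hlt.1 hlt.2] with x hx
      exact hlinv_right x hx
    exact HasDerivAt.of_local_left_inverse (hlinv_contAt t ht) h1
      (hwpos t (hSsub ht)).ne' h2
  -- smoothness of ρ
  have hρeq : ρ = fun t => (p t * r t) ^ (1 / 4 : ℝ) := funext hρ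
  have hρC : ContDiffOn ℝ 2 ρ (Set.Ioo A B) := by
    rw [hρeq]
    exact ((hp.mono hSsub).mul (hr.mono hSsub)).rpow_const_of_ne fun t ht =>
      (mul_pos (hppos t (hSsub ht)) (hrpos t (hSsub ht))).ne'
  have hρd : ∀ t ∈ Set.Ioo A B, HasDerivAt ρ (deriv ρ t) t := fun t ht =>
    ((hρC.differentiableOn (by norm_num)).differentiableAt (hSopen.mem_nhds ht)).hasDerivAt
  have hρ'diff : DifferentiableAt ℝ (deriv ρ) y :=
    ((hρC.deriv_of_isOpen hSopen (m := 1) (by norm_num)).differentiableOn one_ne_zero).differentiableAt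
      (hSopen.mem_nhds hy)
  -- differentiability of w at y
  have hwdiff : DifferentiableAt ℝ w y := by
    have h1 : ContDiffAt ℝ 1 (fun t => r t / p t) y :=
      ((hr.contDiffAt (Icc_mem_nhds hy.1 hy.2)).of_le one_le_two).div
        ((hp.contDiffAt (Icc_mem_nhds hy.1 hy.2)).of_le one_le_two) (hppos y hyI).ne'
    exact (h1.sqrt (div_pos (hrpos y hyI) (hppos y hyI)).ne').differentiableAt one_ne_zero
  -- first derivative of ρhat
  have hρhat_eq : ρhat = ρ ∘ linv := funext fun x => hρhat x
  have hρhat' : ∀ t ∈ Set.Ioo A B, HasDerivAt ρhat (deriv ρ t * (w t)⁻¹) (l t) := by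
    intro t ht
    rw [hρhat_eq]
    have h1 : HasDerivAt ρ (deriv ρ t) (linv (l t)) := by
      rw [hlinv_left t (hSsub ht)]; exact hρd t ht
    exact h1.comp (l t) (hlinv' t ht)
  set F : ℝ → ℝ := fun t => deriv ρ t * (w t)⁻¹ with hFdef
  -- formula for deriv ρhat on Ioo a b
  have hderiv1 : ∀ x ∈ Set.Ioo a b, deriv ρhat x = F (linv x) := by
    intro x hx
    have hx' := hlinv_right x (Set.Ioo_subset_Icc_self hx)
    have h1 := hlinv_maps (Set.Ioo_subset_Icc_self hx)
    have hxI : linv x ∈ Set.Ioo A B := by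
      refine ⟨lt_of_le_of_ne h1.1 ?_, lt_of_lt_of_le (lt_of_le_of_ne h1.2 ?_) le_rfl⟩
      · intro h
        have : a = x := by rw [ha, h, hx']
        exact absurd hx.1 (by rw [this]; exact lt_irrefl x)
      · intro h
        have : b = x := by rw [hb, ← h, hx']
        exact absurd hx.2 (by rw [this]; exact lt_irrefl x)
    have h2 := (hρhat' (linv x) hxI).deriv
    rw [hx'] at h2
    exact h2
  -- second derivative of ρhat at l y
  have hev : deriv ρhat =ᶠ[nhds (l y)] fun x => F (linv x) :=
    Filter.eventuallyEq_of_mem (Ioo_mem_nhds (hlmem y hy).1 (hlmem y hy).2) hderiv1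
  have hFdiff : DifferentiableAt ℝ F y :=
    hρ'diff.mul (hwdiff.inv (hwpos y hyI).ne')
  have hFlinv : HasDerivAt (fun x => F (linv x)) (deriv F y * (w y)⁻¹) (l y) := by
    have h1 : HasDerivAt F (deriv F y) (linv (l y)) := by
      rw [hlinv_left y hyI]; exact hFdiff.hasDerivAt
    exact h1.comp (l y) (hlinv' y hy)
  have hd2 : deriv (deriv ρhat) (l y) = deriv F y * (w y)⁻¹ := by
    rw [hev.deriv_eq]; exact hFlinv.deriv
  -- the function u and its derivative
  have hueq : ∀ s ∈ Set.Icc A B, (p s * r s) ^ (-(1 / 4) : ℝ) = (ρ s)⁻¹ := by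
    intro s hs
    rw [hρ s]
    exact Real.rpow_neg (mul_pos (hppos s hs) (hrpos s hs)).le _
  have hderivu : ∀ t ∈ Set.Ioo A B,
      deriv (fun s => (p s * r s) ^ (-(1 / 4) : ℝ)) t = -deriv ρ t / ρ t ^ 2 := by
    intro t ht
    have he : (fun s => (p s * r s) ^ (-(1 / 4) : ℝ)) =ᶠ[nhds t] fun s => (ρ s)⁻¹ :=
      Filter.eventuallyEq_of_mem (Icc_mem_nhds ht.1 ht.2) hueq
    rw [he.deriv_eq]
    exact ((hρd t ht).inv (hρpos t (hSsub ht)).ne').deriv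
  -- p * w = ρ ^ 2
  have hpw : ∀ t ∈ Set.Icc A B, p t * w t = ρ t ^ 2 := by
    intro t ht
    have hpt := hppos t ht
    have hrt := hrpos t ht
    have h1 : ρ t ^ 2 = Real.sqrt (p t * r t) := by
      rw [hρ t, ← Real.rpow_natCast ((p t * r t) ^ (1 / 4 : ℝ)) 2,
        ← Real.rpow_mul (mul_pos hpt hrt).le, Real.sqrt_eq_rpow]
      norm_num
    have h2 : p t * w t = Real.sqrt (p t * r t) := by
      rw [hwdef]
      show p t * Real.sqrt (r t / p t) = Real.sqrt (p t * r t)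
      rw [show p t = Real.sqrt (p t ^ 2) from (Real.sqrt_sq hpt.le).symm,
        ← Real.sqrt_mul (sq_nonneg _)]
      congr 1
      field_simp
      ring_nf
      rw [Real.sq_sqrt (sq_nonneg _)]
    rw [h2, h1]
  -- p * deriv u = -F near y
  have hBe : (fun t => p t * deriv (fun s => (p s * r s) ^ (-(1 / 4) : ℝ)) t)
      =ᶠ[nhds y] fun t => -F t := by
    filter_upwards [hSopen.mem_nhds hy] with t ht
    rw [hderivu t ht, hFdef]
    have hw' := (hwpos t (hSsub ht)).ne'
    have hρ' := (hρpos t (hSsub ht)).ne'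
    have hpwt := hpw t (hSsub ht)
    field_simp
    first
    | linear_combination deriv ρ t * hpwt
    | linear_combination (-(deriv ρ t)) * hpwt
    | nlinarith [hpwt]
  have hD : deriv (fun t => p t * deriv (fun s => (p s * r s) ^ (-(1 / 4) : ℝ)) t) y
      = -deriv F y := by
    rw [hBe.deriv_eq, deriv.fun_neg]
  -- key rpow identity
  have hkey : (p y / r y ^ 3) ^ (1 / 4 : ℝ) = (w y)⁻¹ * (ρ y)⁻¹ := by
    have hP := hppos y hyI
    have hR := hrpos y hyI
    have hwy := hwpos y hyI
    have hρy := hρpos y hyI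
    have h1 : (0:ℝ) < (p y / r y ^ 3) ^ (1 / 4 : ℝ) :=
      Real.rpow_pos_of_pos (by positivity) _
    have h2 : (0:ℝ) < (w y)⁻¹ * (ρ y)⁻¹ := by positivity
    refine (pow_left_inj₀ h1.le h2.le (by norm_num : (4:ℕ) ≠ 0)).1 ?_
    have e1 : ((p y / r y ^ 3) ^ (1 / 4 : ℝ)) ^ (4:ℕ) = p y / r y ^ 3 := by
      rw [← Real.rpow_natCast ((p y / r y ^ 3) ^ (1 / 4 : ℝ)) 4,
        ← Real.rpow_mul (by positivity)]
      norm_num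
    have e2 : w y ^ (4:ℕ) = (r y / p y) ^ 2 := by
      rw [hwdef]
      show Real.sqrt (r y / p y) ^ (4:ℕ) = (r y / p y) ^ 2
      rw [show (4:ℕ) = 2 * 2 from rfl, pow_mul, Real.sq_sqrt (by positivity)]
    have e3 : ρ y ^ (4:ℕ) = p y * r y := by
      rw [hρ y, ← Real.rpow_natCast ((p y * r y) ^ (1 / 4 : ℝ)) 4,
        ← Real.rpow_mul (by positivity)]
      norm_num
    rw [e1, mul_pow, inv_pow, inv_pow, e2, e3]
    field_simp
  -- assemble
  have hG2 : -((p y / r y ^ 3) ^ (1 / 4 : ℝ) *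
      deriv (fun t => p t * deriv (fun s => (p s * r s) ^ (-(1 / 4) : ℝ)) t) y) =
      deriv (deriv ρhat) (l y) / ρ y := by
    rw [hd2, hD, hkey]
    ring
  refine ⟨?_, hG2⟩
  rw [hQ (l y), hlinv_left y hyI, ← hG2]
  push_cast
  ring
end
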